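/- arXiv:0804.2776 — 6 statements merged into one kernel-verified Lean document; each statement's English description precedes it below -/
import Mathlib

section
/- A sequence of positive integers (d_0, ..., d_{n-1}) with n ≥ 2 is the degree sequence of some tree on n vertices if and only if every d_i > 0 and the sum of all d_i equals 2(n-1). -/
open SimpleGraph Finset

/-- The degree of vertex `v`: the number of its neighbors. -/
noncomputable def gdeg {V : Type*} (G : SimpleGraph V) (v : V) : ℕ :=
  (G.neighborSet v).ncard

lemma top_card_two {V : Type*} [Fintype V] [DecidableEq V] (h : Fintype.card V = 2) :
    (⊤ : SimpleGraph V).IsTree ∧ ∀ v, gdeg (⊤ : SimpleGraph V) v = 1 := by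
  have hne : Nonempty V := Fintype.card_pos_iff.mp (by omega)
  refine ⟨⟨SimpleGraph.connected_top, ?_⟩, ?_⟩
  · intro v c hc
    have h3 := hc.three_le_length
    have hnodup : c.support.tail.Nodup := hc.support_nodup
    have hlen : c.support.tail.length ≤ Fintype.card V := hnodup.length_le_card
    have : c.support.length = c.length + 1 := c.length_support
    simp [List.length_tail, this] at hlen
    omega
  · intro v
    have : (⊤ : SimpleGraph V).neighborSet v = {v}ᶜ := by
      ext w; simp [SimpleGraph.neighborSet, eq_comm, ne_comm]
    rw [gdeg, this]
    have := Set.ncard_add_ncard_compl ({v} : Set V)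
    rw [Set.ncard_singleton, Nat.card_eq_fintype_card, h] at this
    omega

lemma step {V : Type} [Fintype V] [DecidableEq V] (i j : V) (hij : i ≠ j)
    (G' : SimpleGraph {v : V // v ≠ i}) (hT' : G'.IsTree) :
    ∃ G : SimpleGraph V, G.IsTree ∧ gdeg G i = 1 ∧
      gdeg G j = gdeg G' ⟨j, hij.symm⟩ + 1 ∧
      ∀ v (hv : v ≠ i), v ≠ j → gdeg G v = gdeg G' ⟨v, hv⟩ := by
  set G : SimpleGraph V := SimpleGraph.fromRel
    (fun a b => (a = i ∧ b = j) ∨ ∃ (ha : a ≠ i) (hb : b ≠ i), G'.Adj ⟨a, ha⟩ ⟨b, hb⟩) with hGdef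
  have adj_iff : ∀ a b, G.Adj a b ↔
      (a = i ∧ b = j) ∨ (a = j ∧ b = i) ∨
        ∃ (ha : a ≠ i) (hb : b ≠ i), G'.Adj ⟨a, ha⟩ ⟨b, hb⟩ := by
    intro a b
    rw [hGdef, SimpleGraph.fromRel_adj]
    constructor
    · rintro ⟨hab, (⟨rfl, rfl⟩ | ⟨ha, hb, h⟩) | (⟨rfl, rfl⟩ | ⟨hb, ha, h⟩)⟩
      · exact Or.inl ⟨rfl, rfl⟩
      · exact Or.inr (Or.inr ⟨ha, hb, h⟩)
      · exact Or.inr (Or.inl ⟨rfl, rfl⟩)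
      · exact Or.inr (Or.inr ⟨ha, hb, h.symm⟩)
    · rintro (⟨rfl, rfl⟩ | ⟨rfl, rfl⟩ | ⟨ha, hb, h⟩)
      · exact ⟨hij, Or.inl (Or.inl ⟨rfl, rfl⟩)⟩
      · exact ⟨hij.symm, Or.inr (Or.inl ⟨rfl, rfl⟩)⟩
      · refine ⟨fun hab => ?_, Or.inl (Or.inr ⟨ha, hb, h⟩)⟩
        subst hab
        exact G'.irrefl h
  have hadj_ij : G.Adj i j := (adj_iff i j).mpr (Or.inl ⟨rfl, rfl⟩)
  have only_nbr : ∀ b, G.Adj i b → b = j := by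
    intro b hb
    rcases (adj_iff i b).mp hb with ⟨_, rfl⟩ | ⟨hb1, _⟩ | ⟨ha, _, _⟩
    · rfl
    · exact absurd hb1 hij
    · exact absurd rfl ha
  -- the hom from G' to G
  have fc_adj : ∀ a b : {v : V // v ≠ i}, G'.Adj a b → G.Adj a.1 b.1 := by
    intro a b h
    refine (adj_iff a.1 b.1).mpr (Or.inr (Or.inr ⟨a.2, b.2, ?_⟩))
    simpa using h
  let f : G' →g G := ⟨Subtype.val, fun {a b} h => fc_adj a b h⟩
  -- connectivity
  have hconn : G.Connected := by
    rw [connected_iff]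
    refine ⟨?_, ⟨i⟩⟩
    have key : ∀ u, G.Reachable u j := by
      intro u
      by_cases hu : u = i
      · subst hu; exact hadj_ij.reachable
      · exact (hT'.isConnected.preconnected ⟨u, hu⟩ ⟨j, hij.symm⟩).map f
    exact fun u v => (key u).trans (key v).symm
  -- no cycle passes through i
  have no_cycle_at_i : ∀ (c : G.Walk i i), ¬c.IsCycle := by
    intro c hc
    cases c with
    | nil => exact hc.ne_nil rfl
    | cons h p =>
      rename_i x
      have hx2 : x = j := only_nbr _ h
      obtain ⟨y, h2, q, hq⟩ :=
        Walk.exists_eq_cons_of_ne (show i ≠ x by rw [hx2]; exact hij) p.reverse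
      have hy : y = j := only_nbr _ h2
      have hmem : s(i, y) ∈ p.reverse.edges := by rw [hq]; simp
      rw [Walk.edges_reverse, List.mem_reverse, hy, ← hx2] at hmem
      have hnodup := hc.isCircuit.isTrail.edges_nodup
      rw [Walk.edges_cons] at hnodup
      exact (List.nodup_cons.mp hnodup).1 hmem
  -- comap identification
  have hGc : G.comap (Subtype.val : {v : V // v ≠ i} → V) = G' := by
    ext a b
    rw [comap_adj, adj_iff]
    constructor
    · rintro (⟨ha, _⟩ | ⟨_, hb⟩ | ⟨ha, hb, h⟩)
      · exact absurd ha a.2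
      · exact absurd hb b.2
      · simpa using h
    · intro h
      exact Or.inr (Or.inr ⟨a.2, b.2, by simpa using h⟩)
  let fc : G.comap (Subtype.val : {v : V // v ≠ i} → V) →g G := ⟨Subtype.val, fun h => h⟩
  have pull : ∀ {a b : V} (p : G.Walk a b), i ∉ p.support → ∀ (ha : a ≠ i) (hb : b ≠ i),
      ∃ q : (G.comap (Subtype.val : {v : V // v ≠ i} → V)).Walk ⟨a, ha⟩ ⟨b, hb⟩,
        q.map fc = p := by
    intro a b p
    induction p with
    | nil => exact fun _ _ _ => ⟨Walk.nil, by simp⟩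
    | cons h p ihp =>
      rename_i u x w
      intro hsupp ha hb
      rw [Walk.support_cons, List.mem_cons] at hsupp
      push_neg at hsupp
      have hx : x ≠ i := fun e => hsupp.2 (e ▸ p.start_mem_support)
      obtain ⟨q, hq⟩ := ihp hsupp.2 hx hb
      exact ⟨Walk.cons (by exact h) q, by subst hq; rfl⟩
  -- acyclicity
  have hacyc : G.IsAcyclic := by
    intro v c hc
    by_cases hvi : i ∈ c.support
    · exact no_cycle_at_i (c.rotate i hvi) (hc.rotate hvi)
    · have hv : v ≠ i := fun e => hvi (e ▸ c.start_mem_support)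
      obtain ⟨q, hq⟩ := pull c hvi hv hv
      have hmc : (q.map fc).IsCycle := by rw [hq]; exact hc
      have hqc : q.IsCycle :=
        (Walk.map_isCycle_iff_of_injective (f := fc)
          (by exact Subtype.val_injective)).mp hmc
      have hac : (G.comap (Subtype.val : {v : V // v ≠ i} → V)).IsAcyclic := by
        rw [hGc]; exact hT'.IsAcyclic
      exact hac q hqc
  -- neighbor sets
  have nbr_i : G.neighborSet i = {j} := by
    ext b
    simp only [mem_neighborSet, Set.mem_singleton_iff]
    exact ⟨only_nbr b, fun e => e ▸ hadj_ij⟩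
  have nbr_j : G.neighborSet j =
      insert i (Subtype.val '' G'.neighborSet ⟨j, hij.symm⟩) := by
    ext b
    simp only [mem_neighborSet, Set.mem_insert_iff, Set.mem_image]
    rw [adj_iff]
    constructor
    · rintro (⟨hji, _⟩ | ⟨_, rfl⟩ | ⟨ha, hb, h⟩)
      · exact absurd hji hij.symm
      · exact Or.inl rfl
      · exact Or.inr ⟨⟨b, hb⟩, by simpa using h, rfl⟩
    · rintro (rfl | ⟨⟨b', hb'⟩, h, rfl⟩)
      · exact Or.inr (Or.inl ⟨rfl, rfl⟩)
      · exact Or.inr (Or.inr ⟨hij.symm, hb', by simpa using h⟩)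
  have nbr_v : ∀ v (hv : v ≠ i), v ≠ j →
      G.neighborSet v = Subtype.val '' G'.neighborSet ⟨v, hv⟩ := by
    intro v hv hvj
    ext b
    simp only [mem_neighborSet, Set.mem_image]
    rw [adj_iff]
    constructor
    · rintro (⟨hvi, _⟩ | ⟨hvj', _⟩ | ⟨ha, hb, h⟩)
      · exact absurd hvi hv
      · exact absurd hvj' hvj
      · exact ⟨⟨b, hb⟩, by simpa using h, rfl⟩
    · rintro ⟨⟨b', hb'⟩, h, rfl⟩
      exact Or.inr (Or.inr ⟨hv, hb', by simpa using h⟩)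
  refine ⟨G, ⟨hconn, hacyc⟩, ?_, ?_, ?_⟩
  · rw [gdeg, nbr_i, Set.ncard_singleton]
  · rw [gdeg, nbr_j, Set.ncard_insert_of_notMem (by simp) (Set.toFinite _),
      Set.ncard_image_of_injective _ Subtype.val_injective]
    rfl
  · intro v hv hvj
    rw [gdeg, nbr_v v hv hvj, Set.ncard_image_of_injective _ Subtype.val_injective]
    rfl


lemma aux : ∀ (n : ℕ), 0 < n → ∀ (V : Type) (_ : Fintype V) (_ : DecidableEq V),
    Fintype.card V = n → ∀ d : V → ℕ, (∀ v, 0 < d v) → ∑ v, d v = 2 * (n - 1) →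
    ∃ G : SimpleGraph V, G.IsTree ∧ ∀ v, gdeg G v = d v := by
  intro n
  induction n using Nat.strong_induction_on with
  | _ n ih =>
  intro hn V instF instD hcard d hpos hsum
  -- case n = 1 : contradiction
  rcases Nat.lt_or_ge n 2 with hn2 | hn2
  · interval_cases n
    obtain ⟨v⟩ : Nonempty V := Fintype.card_pos_iff.mp (by omega)
    have : d v ≤ ∑ w, d w := Finset.single_le_sum (fun w _ => Nat.zero_le _) (mem_univ v)
    rw [hsum] at this
    have := hpos v
    omega
  -- case all degrees 1 : n = 2
  by_cases hall : ∀ v, d v = 1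
  · have hsum2 : ∑ v, d v = n := by
      rw [← hcard, Fintype.card_eq_sum_ones]
      exact Finset.sum_congr rfl fun v _ => hall v
    have hn2' : n = 2 := by omega
    obtain ⟨hT, hD⟩ := top_card_two (V := V) (by omega)
    exact ⟨⊤, hT, fun v => by rw [hD v, hall v]⟩
  -- main case
  push_neg at hall
  obtain ⟨j, hj⟩ := hall
  have hj2 : 2 ≤ d j := by have := hpos j; omega
  have hex1 : ∃ i, d i = 1 := by
    by_contra hno
    push_neg at hno
    have h2 : ∀ v, 2 ≤ d v := fun v => by have := hpos v; have := hno v; omega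
    have : 2 * n ≤ ∑ v, d v := by
      calc 2 * n = ∑ _v : V, 2 := by rw [← hcard]; simp [mul_comm]
      _ ≤ ∑ v, d v := Finset.sum_le_sum fun v _ => h2 v
    omega
  obtain ⟨i, hi⟩ := hex1
  have hij : i ≠ j := by intro h; rw [h] at hi; omega
  -- the reduced degree sequence on the subtype
  set A : Finset V := univ.erase i with hA
  have hAj : j ∈ A := Finset.mem_erase.mpr ⟨hij.symm, mem_univ j⟩
  have hcard' : Fintype.card {v : V // v ≠ i} = n - 1 := by
    rw [Fintype.card_subtype_compl, Fintype.card_subtype_eq, hcard]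
  set d' : {v : V // v ≠ i} → ℕ := fun v => if (v : V) = j then d j - 1 else d v.1 with hd'
  have hpos' : ∀ v, 0 < d' v := by
    intro v
    rw [hd']
    dsimp only
    split
    · omega
    · exact hpos v.1
  have e1 : ∑ v : {v : V // v ≠ i}, d' v = ∑ v ∈ A, (if v = j then d j - 1 else d v) := by
    symm
    apply Finset.sum_subtype
    intro x
    simp [hA, Finset.mem_erase]
  have e2 : ∑ v ∈ A, (fun v => if v = j then d j - 1 else d v) v
      = (d j - 1) + ∑ v ∈ A.erase j, d v := by
    rw [← Finset.add_sum_erase A _ hAj, if_pos rfl]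
    congr 1
    apply Finset.sum_congr rfl
    intro v hv
    exact if_neg (Finset.mem_erase.mp hv).1
  have e3 : ∑ v ∈ A, d v = d j + ∑ v ∈ A.erase j, d v :=
    (Finset.add_sum_erase A d hAj).symm
  have e4 : ∑ v : V, d v = d i + ∑ v ∈ A, d v :=
    (Finset.add_sum_erase univ d (mem_univ i)).symm
  have hsum' : ∑ v, d' v = 2 * ((n - 1) - 1) := by
    rw [e1]
    simp only at e2 ⊢
    omega
  obtain ⟨G', hT', hD'⟩ := ih (n - 1) (by omega) (by omega) _ inferInstance inferInstance
    hcard' d' hpos' hsum'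
  obtain ⟨G, hT, hdi, hdj, hdv⟩ := step i j hij G' hT'
  refine ⟨G, hT, ?_⟩
  intro v
  by_cases hv : v = i
  · rw [hv, hdi, hv] at *; omega
  · by_cases hvj : v = j
    · subst hvj
      rw [hdj, hD' ⟨v, hv⟩]
      have : d' ⟨v, hv⟩ = d v - 1 := if_pos rfl
      rw [this]
      omega
    · rw [hdv v hv hvj, hD' ⟨v, hv⟩]
      exact if_neg hvj

lemma gdeg_eq_degree {V : Type*} [Fintype V] [DecidableEq V] (G : SimpleGraph V)
    [DecidableRel G.Adj] (v : V) : gdeg G v = G.degree v := by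
  rw [gdeg, ← SimpleGraph.card_neighborSet_eq_degree, Set.ncard_eq_toFinset_card']
  simp [Set.toFinset_card]

lemma forward {n : ℕ} (hn : 2 ≤ n) (G : SimpleGraph (Fin n)) (hG : G.IsTree)
    (σ : Equiv.Perm (Fin n)) (d : Fin n → ℕ) (hd : ∀ i, gdeg G (σ i) = d i) :
    (∀ i, 0 < d i) ∧ ∑ i, d i = 2 * (n - 1) := by
  classical
  constructor
  · intro i
    rw [← hd i]
    have hne : (G.neighborSet (σ i)).Nonempty := by
      obtain ⟨w, hw⟩ := Fintype.exists_ne_of_one_lt_card (by simp; omega) (σ i)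
      obtain ⟨p⟩ := hG.isConnected.preconnected (σ i) w
      cases p with
      | nil => exact absurd rfl hw.symm
      | cons h q => exact ⟨_, h⟩
    rw [gdeg]
    exact hne.ncard_pos (Set.toFinite _)
  · have h1 : ∑ i, d i = ∑ i, gdeg G (σ i) := by
      exact Finset.sum_congr rfl fun i _ => (hd i).symm
    rw [h1, Equiv.sum_comp σ (gdeg G)]
    have h2 : ∑ v, gdeg G v = ∑ v, G.degree v :=
      Finset.sum_congr rfl fun v _ => gdeg_eq_degree G v
    rw [h2, SimpleGraph.sum_degrees_eq_twice_card_edges]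
    have h3 := hG.card_edgeFinset
    simp only [Fintype.card_fin] at h3
    omega

/-- A sequence of positive integers `(d 0, …, d (n-1))` with `n ≥ 2` is the degree
sequence of some tree on `n` vertices iff every `d i > 0` and `∑ d i = 2 (n-1)`. -/
theorem stmt0 (n : ℕ) (hn : 2 ≤ n) (d : Fin n → ℕ) :
    (∃ G : SimpleGraph (Fin n), G.IsTree ∧ ∃ σ : Equiv.Perm (Fin n), ∀ i, gdeg G (σ i) = d i)
      ↔ ((∀ i, 0 < d i) ∧ ∑ i, d i = 2 * (n - 1)) := by
  constructor
  · rintro ⟨G, hG, σ, hσ⟩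
    exact forward hn G hG σ d hσ
  · rintro ⟨hpos, hsum⟩
    obtain ⟨G, hT, hD⟩ := aux n (by omega) (Fin n) inferInstance inferInstance
      (Fintype.card_fin n) d hpos hsum
    exact ⟨G, hT, Equiv.refl _, fun i => hD i⟩
end

section
/- (Shifting switching preserves treeness and degree sum changes only at u and v.) Let T be a tree with vertices u ≠ v and edges ux₁, ..., uxₖ such that no xᵢ lies on the path from u to v. Then the graph T' obtained by deleting edges ux₁,...,uxₖ and adding edges vx₁,...,vxₖ is again a tree. -/
open SimpleGraph Finset

/-- Shifting preserves treeness: moving the edges `u x₁, …, u xₖ` (where no `xᵢ`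
lies on the `uv`-path) to `v x₁, …, v xₖ` yields again a tree. -/
theorem stmt6 {V : Type*} [Fintype V] [DecidableEq V] (T : SimpleGraph V)
    (hT : T.IsTree) (u v : V) (huv : u ≠ v) (k : ℕ) (x : Fin k → V)
    (hinj : Function.Injective x) (hadj : ∀ i, T.Adj u (x i))
    (hpath : ∀ p : T.Path u v, ∀ i, x i ∉ p.1.support)
    (T' : SimpleGraph V)
    (hT' : T' = (T.deleteEdges (Set.range fun i => s(u, x i))) ⊔
        SimpleGraph.fromEdgeSet (Set.range fun i => s(v, x i))) :
    T'.IsTree := by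
  subst hT'
  set R1 : Set (Sym2 V) := Set.range fun i => s(u, x i) with hR1
  set R2 : Set (Sym2 V) := Set.range fun i => s(v, x i) with hR2
  set D : SimpleGraph V := T.deleteEdges R1 with hDdef
  -- the unique u-v path in T
  obtain ⟨w0, hw0, -⟩ := hT.existsUnique_path u v
  set p₀ : T.Path u v := ⟨w0, hw0⟩ with hp₀
  have hx_np : ∀ i, x i ∉ p₀.1.support := hpath p₀
  have hxv : ∀ i, x i ≠ v := fun i h => hx_np i (by rw [h]; exact Walk.end_mem_support _)
  have hxu : ∀ i, x i ≠ u := fun i => ((hadj i).ne).symm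
  have hux_notD : ∀ i, s(u, x i) ∉ D.edgeSet := by
    intro i h
    rw [hDdef, edgeSet_deleteEdges] at h
    exact h.2 ⟨i, rfl⟩
  -- key non-reachability facts in D
  have noreach : ∀ (i : Fin k) (b : V), (b = v ∨ ∃ j, j ≠ i ∧ b = x j) →
      ¬ D.Reachable (x i) b := by
    rintro i b hb ⟨w⟩
    have hDT : ∀ e ∈ w.edges, e ∈ T.edgeSet := fun e he =>
      SimpleGraph.edgeSet_mono (T.deleteEdges_le R1) (w.edges_subset_edgeSet he)
    set wT : T.Walk (x i) b := w.transfer T hDT with hwT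
    -- the canonical path from x i to b uses the edge s(x i, u)
    have hmem : s(x i, u) ∈ (wT.toPath : T.Walk (x i) b).edges := by
      rcases hb with rfl | ⟨j, hji, rfl⟩
      · have hpath' : (Walk.cons (hadj i).symm p₀.1).IsPath :=
          p₀.2.cons (hx_np i)
        have := hT.IsAcyclic.path_unique wT.toPath ⟨_, hpath'⟩
        rw [this]
        simp
      · have hpath' : (Walk.cons (hadj i).symm (Walk.cons (hadj j) Walk.nil)).IsPath := by
          simp [Walk.isPath_def, hxu i, hxu j, (hadj j).ne]
          exact fun h => hji (hinj h.symm)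
        have := hT.IsAcyclic.path_unique wT.toPath ⟨_, hpath'⟩
        rw [this]
        simp
    have hmem2 : s(x i, u) ∈ w.edges := by
      have := wT.edges_toPath_subset hmem
      rwa [hwT, Walk.edges_transfer] at this
    have : s(x i, u) ∈ D.edgeSet := w.edges_subset_edgeSet hmem2
    rw [Sym2.eq_swap] at this
    exact hux_notD i this
  -- the u-v path survives in D
  have huvD : D.Reachable u v := by
    refine ⟨p₀.1.toDeleteEdges R1 ?_⟩
    rintro e he ⟨j, rfl⟩
    exact hx_np j (p₀.1.snd_mem_support_of_mem_edges he)
  have hvxT' : ∀ i, (D ⊔ fromEdgeSet R2).Adj v (x i) := fun i =>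
    (sup_adj D (fromEdgeSet R2) v (x i)).mpr
      (Or.inr ((fromEdgeSet_adj _).mpr ⟨⟨i, rfl⟩, (hxv i).symm⟩))
  -- connectivity
  have hstep : ∀ {a b : V}, T.Adj a b → (D ⊔ fromEdgeSet R2).Reachable a b := by
    intro a b hab
    by_cases h : s(a, b) ∈ R1
    · obtain ⟨j, hj⟩ := h
      have hux : (D ⊔ fromEdgeSet R2).Reachable u (x j) :=
        (huvD.mono le_sup_left).trans (hvxT' j).reachable
      rw [Sym2.eq_iff] at hj
      rcases hj with ⟨rfl, rfl⟩ | ⟨rfl, rfl⟩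
      · exact hux
      · exact hux.symm
    · exact ((sup_adj D (fromEdgeSet R2) a b).mpr (Or.inl (deleteEdges_adj.mpr ⟨hab, h⟩))).reachable
  have hwalkreach : ∀ {a b : V}, T.Walk a b → (D ⊔ fromEdgeSet R2).Reachable a b := by
    intro a b w
    induction w with
    | nil => exact Reachable.refl _
    | cons h p ih => exact (hstep h).trans ih
  have hconn : (D ⊔ fromEdgeSet R2).Connected := by
    rw [connected_iff]
    refine ⟨fun a b => ?_, hT.isConnected.nonempty⟩
    obtain ⟨w⟩ := hT.isConnected.preconnected a b
    exact hwalkreach w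
  -- every new edge is a bridge
  have hbridge : ∀ i, (D ⊔ fromEdgeSet R2).IsBridge s(v, x i) := by
    intro i
    rw [isBridge_iff]
    refine fun ⟨w⟩ => ?_
    have key : ∀ {a b : V},
        ((D ⊔ fromEdgeSet R2) \ fromEdgeSet {s(v, x i)}).Walk a b →
        (D.Reachable b v ∨ ∃ j, j ≠ i ∧ D.Reachable b (x j)) →
        (D.Reachable a v ∨ ∃ j, j ≠ i ∧ D.Reachable a (x j)) := by
      intro a b w
      induction w with
      | nil => exact id
      | @cons a c b h p ih =>
        intro hgood
        have hgc := ih hgood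
        rw [sdiff_adj] at h
        obtain ⟨h1, h2⟩ := h
        rcases (sup_adj D (fromEdgeSet R2) a c).mp h1 with hD | hE
        · rcases hgc with h3 | ⟨j, hji, h3⟩
          · exact Or.inl (hD.reachable.trans h3)
          · exact Or.inr ⟨j, hji, hD.reachable.trans h3⟩
        · rw [fromEdgeSet_adj _] at hE
          obtain ⟨⟨j, hj⟩, hne⟩ := hE
          rw [Sym2.eq_iff] at hj
          rcases hj with ⟨rfl, rfl⟩ | ⟨rfl, rfl⟩
          · exact Or.inl (Reachable.refl _)
          · refine Or.inr ⟨j, ?_, Reachable.refl _⟩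
            rintro rfl
            exact h2 ((fromEdgeSet_adj _).mpr
              ⟨Set.mem_singleton_iff.mpr (Sym2.eq_swap), (hxv j)⟩)
    rcases key w.reverse (Or.inl (Reachable.refl v)) with h3 | ⟨j, hji, h3⟩
    · exact noreach i v (Or.inl rfl) h3
    · exact noreach i (x j) (Or.inr ⟨j, hji, rfl⟩) h3
  -- acyclicity
  have hacyc : (D ⊔ fromEdgeSet R2).IsAcyclic := by
    intro a c hc
    have hce : ∀ e ∈ c.edges, e ∈ D.edgeSet := by
      intro e he
      have heT := c.edges_subset_edgeSet he
      rw [edgeSet_sup, edgeSet_fromEdgeSet] at heT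
      rcases heT with h | ⟨⟨j, rfl⟩, -⟩
      · exact h
      · exact absurd he ((hbridge j).notMem_edges_of_isCycle hc)
    have hcyc : ((c.transfer D hce).mapLe (T.deleteEdges_le R1)).IsCycle :=
      (Walk.mapLe_isCycle (T.deleteEdges_le R1)).mpr (hc.transfer hce)
    exact hT.IsAcyclic _ hcyc
  exact ⟨hconn, hacyc⟩
end

section
/- (Shifting strictly increases the maximum Laplacian eigenvalue.) Let T be a tree, u, v ∈ V(T), and ux₁,...,uxₖ ∈ E(T) with k ≥ 1 such that no xᵢ lies on the path from u to v. Let T' be the tree obtained by replacing the edges ux₁,...,uxₖ by vx₁,...,vxₖ. If f is an eigenvector of L(T) for λ(T) and |f(u)| ≤ |f(v)|, then λ(T') > λ(T). -/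
open SimpleGraph Finset Matrix

open scoped Classical in
/-- The Laplacian matrix `L = D - A` of a graph, with real entries. -/
noncomputable def lap {V : Type*} [Fintype V] [DecidableEq V] (G : SimpleGraph V) :
    Matrix V V ℝ :=
  Matrix.of fun u v =>
    (if u = v then (gdeg G u : ℝ) else 0) - (if G.Adj u v then 1 else 0)

/-- `lam` is the largest Laplacian eigenvalue of `G`. -/
def IsMaxEig {V : Type*} [Fintype V] [DecidableEq V] (G : SimpleGraph V) (lam : ℝ) : Prop :=
  IsGreatest {μ : ℝ | ∃ f : V → ℝ, f ≠ 0 ∧ (lap G).mulVec f = μ • f} lam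

section Aux
variable {V : Type*} [Fintype V] [DecidableEq V]

open scoped Classical in
noncomputable def qmat (G : SimpleGraph V) : Matrix V V ℝ :=
  Matrix.of fun a b =>
    (if a = b then (gdeg G a : ℝ) else 0) + (if G.Adj a b then 1 else 0)

open scoped Classical in
lemma gdeg_eq_sum (G : SimpleGraph V) (a : V) :
    (gdeg G a : ℝ) = ∑ b, if G.Adj a b then (1:ℝ) else 0 := by
  rw [Finset.sum_boole]
  norm_num [gdeg]
  rw [Set.ncard_eq_toFinset_card']
  congr 1
  ext b
  simp [SimpleGraph.mem_neighborFinset]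

lemma dot_mulVec_expand (M : Matrix V V ℝ) (f : V → ℝ) :
    f ⬝ᵥ (M *ᵥ f) = ∑ a, ∑ b, f a * M a b * f b := by
  simp [dotProduct, mulVec, Finset.mul_sum, mul_assoc]

open scoped Classical in
lemma sum_adj_weight (G : SimpleGraph V) (g : V → ℝ) :
    ∑ a, ∑ b, (if G.Adj a b then g a else 0) = ∑ a, (gdeg G a : ℝ) * g a := by
  refine Finset.sum_congr rfl fun a _ => ?_
  rw [gdeg_eq_sum, Finset.sum_mul]
  refine Finset.sum_congr rfl fun b _ => ?_
  split_ifs <;> ring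

open scoped Classical in
lemma quad_lap (G : SimpleGraph V) (f : V → ℝ) :
    f ⬝ᵥ (lap G *ᵥ f)
      = (∑ a, ∑ b, if G.Adj a b then (f a - f b)^2 else 0) / 2 := by
  rw [dot_mulVec_expand]
  have h1 : ∀ a b : V, f a * lap G a b * f b
      = (if a = b then (gdeg G a : ℝ) * (f a * f b) else 0)
        - (if G.Adj a b then f a * f b else 0) := by
    intro a b
    simp only [lap, Matrix.of_apply]
    split_ifs <;> ring
  have h2 : ∀ a b : V, (if G.Adj a b then (f a - f b)^2 else 0)
      = (if G.Adj a b then f a * f a else 0) + (if G.Adj b a then f b * f b else 0)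
        - 2 * (if G.Adj a b then f a * f b else 0) := by
    intro a b
    rw [G.adj_comm b a]
    split_ifs <;> ring
  simp only [h1, h2, Finset.sum_sub_distrib, Finset.sum_add_distrib, ← Finset.mul_sum]
  have h3 : ∀ a : V, ∑ b, (if a = b then (gdeg G a : ℝ) * (f a * f b) else 0)
      = (gdeg G a : ℝ) * (f a * f a) := by
    intro a
    rw [Finset.sum_ite_eq]
    simp
  have h4 : ∑ a, ∑ b, (if G.Adj b a then f b * f b else 0)
      = ∑ a, ∑ b, (if G.Adj a b then f a * f a else 0) := Finset.sum_comm
  rw [Finset.sum_congr rfl fun a _ => h3 a, h4, sum_adj_weight]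
  ring

open scoped Classical in
lemma quad_qmat (G : SimpleGraph V) (f : V → ℝ) :
    f ⬝ᵥ (qmat G *ᵥ f)
      = (∑ a, ∑ b, if G.Adj a b then (f a + f b)^2 else 0) / 2 := by
  rw [dot_mulVec_expand]
  have h1 : ∀ a b : V, f a * qmat G a b * f b
      = (if a = b then (gdeg G a : ℝ) * (f a * f b) else 0)
        + (if G.Adj a b then f a * f b else 0) := by
    intro a b
    simp only [qmat, Matrix.of_apply]
    split_ifs <;> ring
  have h2 : ∀ a b : V, (if G.Adj a b then (f a + f b)^2 else 0)
      = (if G.Adj a b then f a * f a else 0) + (if G.Adj b a then f b * f b else 0)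
        + 2 * (if G.Adj a b then f a * f b else 0) := by
    intro a b
    rw [G.adj_comm b a]
    split_ifs <;> ring
  simp only [h1, h2, Finset.sum_add_distrib, ← Finset.mul_sum]
  have h3 : ∀ a : V, ∑ b, (if a = b then (gdeg G a : ℝ) * (f a * f b) else 0)
      = (gdeg G a : ℝ) * (f a * f a) := by
    intro a
    rw [Finset.sum_ite_eq]
    simp
  have h4 : ∑ a, ∑ b, (if G.Adj b a then f b * f b else 0)
      = ∑ a, ∑ b, (if G.Adj a b then f a * f a else 0) := Finset.sum_comm
  rw [Finset.sum_congr rfl fun a _ => h3 a, h4, sum_adj_weight]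
  set A := ∑ a, (gdeg G a : ℝ) * (f a * f a) with hA
  set B := ∑ a, ∑ b, (if G.Adj a b then f a * f b else 0) with hB
  ring

lemma lap_isHermitian (G : SimpleGraph V) : (lap G).IsHermitian := by
  classical
  refine Matrix.ext fun a b => ?_
  simp only [conjTranspose_apply, lap, Matrix.of_apply, star_trivial]
  by_cases hab : a = b
  · subst hab; rfl
  · rw [G.adj_comm b a]
    congr 1
    simp [Ne.symm hab, hab]

lemma qmat_isHermitian (G : SimpleGraph V) : (qmat G).IsHermitian := by
  classical
  refine Matrix.ext fun a b => ?_
  simp only [conjTranspose_apply, qmat, Matrix.of_apply, star_trivial]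
  by_cases hab : a = b
  · subst hab; rfl
  · rw [G.adj_comm b a]
    congr 1
    simp [Ne.symm hab, hab]

lemma posSemidef_shift {M : Matrix V V ℝ} (hM : M.IsHermitian) {lam : ℝ}
    (hub : ∀ μ : ℝ, (∃ g : V → ℝ, g ≠ 0 ∧ M *ᵥ g = μ • g) → μ ≤ lam) :
    (lam • (1 : Matrix V V ℝ) - M).PosSemidef := by
  have hN : (lam • (1 : Matrix V V ℝ) - M).IsHermitian := by
    unfold Matrix.IsHermitian
    rw [conjTranspose_sub, conjTranspose_smul, conjTranspose_one, hM.eq]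
    simp
  refine hN.posSemidef_iff_eigenvalues_nonneg.mpr fun i => ?_
  set w : V → ℝ := ⇑(hN.eigenvectorBasis i) with hw
  have hmv := hN.mulVec_eigenvectorBasis i
  have hw0 : w ≠ 0 := by
    intro h0
    have : hN.eigenvectorBasis i = 0 := by
      ext j; exact congrFun h0 j
    exact hN.eigenvectorBasis.toBasis.ne_zero i (by simpa using this)
  have hMw : M *ᵥ w = (lam - hN.eigenvalues i) • w := by
    have hexp : (lam • (1 : Matrix V V ℝ) - M) *ᵥ w = lam • w - M *ᵥ w := by
      rw [Matrix.sub_mulVec, Matrix.smul_mulVec, Matrix.one_mulVec]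
    rw [hexp] at hmv
    have := hmv
    funext j
    have hj := congrFun this j
    simp only [Pi.sub_apply, Pi.smul_apply, smul_eq_mul] at hj ⊢
    linarith
  have := hub (lam - hN.eigenvalues i) ⟨w, hw0, hMw⟩
  rw [Pi.zero_apply]; linarith

lemma rayleigh_le {M : Matrix V V ℝ} (hM : M.IsHermitian) {lam : ℝ}
    (hub : ∀ μ : ℝ, (∃ g : V → ℝ, g ≠ 0 ∧ M *ᵥ g = μ • g) → μ ≤ lam) (g : V → ℝ) :
    g ⬝ᵥ (M *ᵥ g) ≤ lam * (g ⬝ᵥ g) := by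
  have hpsd := posSemidef_shift hM hub
  have h0 := hpsd.dotProduct_mulVec_nonneg g
  simp only [star_trivial, RCLike.re_to_real] at h0
  have hexp : g ⬝ᵥ ((lam • (1 : Matrix V V ℝ) - M) *ᵥ g)
      = lam * (g ⬝ᵥ g) - g ⬝ᵥ (M *ᵥ g) := by
    rw [Matrix.sub_mulVec, Matrix.smul_mulVec, Matrix.one_mulVec, dotProduct_sub,
      dotProduct_smul]
    simp [smul_eq_mul]
  rw [hexp] at h0
  linarith

lemma eigen_of_rayleigh_eq {M : Matrix V V ℝ} (hM : M.IsHermitian) {lam : ℝ}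
    (hub : ∀ μ : ℝ, (∃ g : V → ℝ, g ≠ 0 ∧ M *ᵥ g = μ • g) → μ ≤ lam) (g : V → ℝ)
    (heq : g ⬝ᵥ (M *ᵥ g) = lam * (g ⬝ᵥ g)) :
    M *ᵥ g = lam • g := by
  have hpsd := posSemidef_shift hM hub
  have hexp : g ⬝ᵥ ((lam • (1 : Matrix V V ℝ) - M) *ᵥ g)
      = lam * (g ⬝ᵥ g) - g ⬝ᵥ (M *ᵥ g) := by
    rw [Matrix.sub_mulVec, Matrix.smul_mulVec, Matrix.one_mulVec, dotProduct_sub,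
      dotProduct_smul]
    simp [smul_eq_mul]
  have h0 : star g ⬝ᵥ ((lam • (1 : Matrix V V ℝ) - M) *ᵥ g) = 0 := by
    simp only [star_trivial]
    rw [hexp, heq]; ring
  have := (hpsd.dotProduct_mulVec_zero_iff g).mp h0
  have hNg : lam • g - M *ᵥ g = 0 := by
    rw [← this, Matrix.sub_mulVec, Matrix.smul_mulVec, Matrix.one_mulVec]
  funext a
  have := congrFun hNg a
  simp only [Pi.sub_apply, Pi.smul_apply, Pi.zero_apply, smul_eq_mul] at this ⊢
  linarith

end Aux

section Aux2
variable {V : Type*} [Fintype V] [DecidableEq V]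

open scoped Classical in
lemma qmat_mulVec_apply (G : SimpleGraph V) (g : V → ℝ) (a : V) :
    (qmat G *ᵥ g) a
      = (∑ b, if G.Adj a b then (1:ℝ) else 0) * g a
        + ∑ b, (if G.Adj a b then g b else 0) := by
  have key : ∀ b, qmat G a b * g b
      = (if a = b then (gdeg G a : ℝ) * g b else 0) + (if G.Adj a b then g b else 0) := by
    intro b; simp only [qmat, Matrix.of_apply]; split_ifs <;> ring
  calc (qmat G *ᵥ g) a = ∑ b, qmat G a b * g b := by simp [mulVec, dotProduct]
    _ = (∑ b, if a = b then (gdeg G a : ℝ) * g b else 0)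
          + ∑ b, (if G.Adj a b then g b else 0) := by
        rw [← Finset.sum_add_distrib]; exact Finset.sum_congr rfl fun b _ => key b
    _ = _ := by rw [Finset.sum_ite_eq, if_pos (Finset.mem_univ a), gdeg_eq_sum]

lemma mulVec_conj {σ : V → ℝ} (hσ2 : ∀ w, σ w * σ w = 1)
    {A B : Matrix V V ℝ} (hAB : ∀ a b, B a b = σ a * A a b * σ b)
    {g : V → ℝ} {μ : ℝ} (hg : A *ᵥ g = μ • g) :
    B *ᵥ (σ * g) = μ • (σ * g) := by
  funext a
  have key : ∀ b, B a b * (σ b * g b) = σ a * (A a b * g b) := by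
    intro b
    rw [hAB a b]
    linear_combination σ a * A a b * g b * hσ2 b
  calc (B *ᵥ (σ * g)) a = ∑ b, B a b * (σ b * g b) := by
        simp [mulVec, dotProduct, Pi.mul_apply]
    _ = σ a * ∑ b, A a b * g b := by
        rw [Finset.mul_sum]; exact Finset.sum_congr rfl fun b _ => key b
    _ = σ a * (μ * g a) := by
        congr 1
        have := congrFun hg a
        simpa [mulVec, dotProduct] using this
    _ = (μ • (σ * g)) a := by
        simp only [Pi.smul_apply, Pi.mul_apply, smul_eq_mul]; ring

lemma lap_eq_conj_qmat {G : SimpleGraph V} {σ : V → ℝ} (hσ2 : ∀ w, σ w * σ w = 1)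
    (hσa : ∀ a b, G.Adj a b → σ a = -σ b) (a b : V) :
    lap G a b = σ a * qmat G a b * σ b := by
  classical
  simp only [lap, qmat, Matrix.of_apply]
  split_ifs with h1 h2 h3
  · subst h1; exact absurd h2 (G.irrefl)
  · subst h1; linear_combination (-(gdeg G a : ℝ)) * hσ2 a
  · rw [hσa a b h3]; linear_combination hσ2 b
  · ring

lemma qmat_eq_conj_lap {G : SimpleGraph V} {σ : V → ℝ} (hσ2 : ∀ w, σ w * σ w = 1)
    (hσa : ∀ a b, G.Adj a b → σ a = -σ b) (a b : V) :
    qmat G a b = σ a * lap G a b * σ b := by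
  classical
  simp only [lap, qmat, Matrix.of_apply]
  split_ifs with h1 h2 h3
  · subst h1; exact absurd h2 (G.irrefl)
  · subst h1; linear_combination (-(gdeg G a : ℝ)) * hσ2 a
  · rw [hσa a b h3]; linear_combination -(1:ℝ) * hσ2 b
  · ring

end Aux2

section Aux3
variable {V : Type*}

lemma exists_sign {T : SimpleGraph V} (hT : T.IsTree) (u : V) :
    ∃ σ : V → ℝ, (∀ w, σ w = 1 ∨ σ w = -1) ∧ (∀ a b, T.Adj a b → σ a = -σ b) := by
  classical
  have hEU := hT.existsUnique_path
  have hpw : ∀ w : V, ∃ p : T.Walk u w, p.IsPath ∧ ∀ q : T.Walk u w, q.IsPath → q = p := by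
    intro w
    obtain ⟨p, hp, hu⟩ := hEU u w
    exact ⟨p, hp, hu⟩
  choose p hp hup using hpw
  refine ⟨fun w => (-1 : ℝ)^(p w).length, fun w => ?_, fun a b hab => ?_⟩
  · rcases Nat.even_or_odd (p w).length with h | h
    · exact Or.inl (Even.neg_one_pow h)
    · exact Or.inr (Odd.neg_one_pow h)
  · have key : (p b).length = (p a).length + 1 ∨ (p a).length = (p b).length + 1 := by
      by_cases hb : b ∈ (p a).support
      · right
        have htake : ((p a).takeUntil b hb).IsPath := (hp a).takeUntil hb
        have hqb : (p a).takeUntil b hb = p b := hup b _ htake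
        have hdrop : ((p a).dropUntil b hb).IsPath := (hp a).dropUntil hb
        have hedge : (SimpleGraph.Walk.cons hab.symm SimpleGraph.Walk.nil : T.Walk b a).IsPath := by
          simp [SimpleGraph.Walk.isPath_def, hab.ne']
        obtain ⟨e, he, heu⟩ := hEU b a
        have h1 : (p a).dropUntil b hb = e := heu _ hdrop
        have h2 : (SimpleGraph.Walk.cons hab.symm SimpleGraph.Walk.nil : T.Walk b a) = e :=
          heu _ hedge
        have hlen : ((p a).dropUntil b hb).length = 1 := by
          rw [h1, ← h2]
          simp
        have hspec := SimpleGraph.Walk.take_spec (p a) hb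
        have := congrArg SimpleGraph.Walk.length hspec
        rw [SimpleGraph.Walk.length_append, hlen, hqb] at this
        omega
      · left
        have hq : ((SimpleGraph.Walk.cons hab.symm (p a).reverse).reverse : T.Walk u b).IsPath := by
          apply SimpleGraph.Walk.IsPath.reverse
          apply SimpleGraph.Walk.IsPath.cons (hp a).reverse
          rw [SimpleGraph.Walk.support_reverse, List.mem_reverse]
          exact hb
        have hqb := hup b _ hq
        have : (p b).length = (p a).length + 1 := by
          rw [← hqb]
          simp [SimpleGraph.Walk.length_reverse, SimpleGraph.Walk.length_cons]
        omega
    rcases key with h | h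
    · show (-1:ℝ)^(p a).length = -(-1:ℝ)^(p b).length
      rw [h, pow_succ]; ring
    · show (-1:ℝ)^(p a).length = -(-1:ℝ)^(p b).length
      rw [h, pow_succ]; ring

end Aux3

/-- Shifting strictly increases the largest Laplacian eigenvalue: if the edges
`u x₁, …, u xₖ` (k ≥ 1, no `xᵢ` on the `uv`-path) are replaced by `v x₁, …, v xₖ`
and `|f u| ≤ |f v|` for an eigenvector `f` of `λ(T)`, then `λ(T') > λ(T)`. -/
theorem stmt7 {V : Type*} [Fintype V] [DecidableEq V] (T : SimpleGraph V)
    (hT : T.IsTree) (u v : V) (huv : u ≠ v) (k : ℕ) (hk : 1 ≤ k) (x : Fin k → V)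
    (hinj : Function.Injective x) (hadj : ∀ i, T.Adj u (x i))
    (hpath : ∀ p : T.Path u v, ∀ i, x i ∉ p.1.support)
    (T' : SimpleGraph V)
    (hT' : T' = (T.deleteEdges (Set.range fun i => s(u, x i))) ⊔
        SimpleGraph.fromEdgeSet (Set.range fun i => s(v, x i)))
    (lam lam' : ℝ) (hlam : IsMaxEig T lam) (hlam' : IsMaxEig T' lam')
    (f : V → ℝ) (hf : f ≠ 0) (hef : (lap T).mulVec f = lam • f)
    (hfuv : |f u| ≤ |f v|) :
    lam < lam' := by
  classical
  set S : Set (Sym2 V) := Set.range (fun i => s(u, x i)) with hSdef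
  set D : SimpleGraph V := T.deleteEdges S with hDdef
  obtain ⟨pv, hpv, hupv⟩ := hT.existsUnique_path u v
  have hxu : ∀ i, x i ≠ u := fun i => (hadj i).ne'
  have hxv : ∀ i, x i ≠ v := by
    intro i hiv
    exact hpath ⟨pv, hpv⟩ i (hiv ▸ SimpleGraph.Walk.end_mem_support pv)
  have hnadjv : ∀ i, ¬ T.Adj v (x i) := by
    intro i hvx
    have hw : (SimpleGraph.Walk.cons (hadj i)
        (SimpleGraph.Walk.cons hvx.symm SimpleGraph.Walk.nil) : T.Walk u v).IsPath := by
      simp [SimpleGraph.Walk.isPath_def, SimpleGraph.Walk.support_cons]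
      refine ⟨⟨(hadj i).ne, huv⟩, fun hc => (hxv i) hc⟩
    exact hpath ⟨_, hw⟩ i (by simp)
  have hmemS : ∀ a b : V, s(a,b) ∈ S ↔ ∃ i, (a = u ∧ b = x i) ∨ (a = x i ∧ b = u) := by
    intro a b
    constructor
    · rintro ⟨i, hi⟩
      rcases Sym2.eq_iff.mp hi with ⟨h1, h2⟩ | ⟨h1, h2⟩
      · exact ⟨i, Or.inl ⟨h1.symm, h2.symm⟩⟩
      · exact ⟨i, Or.inr ⟨h2.symm, h1.symm⟩⟩
    · rintro ⟨i, ⟨h1, h2⟩ | ⟨h1, h2⟩⟩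
      · exact ⟨i, by rw [h1, h2]⟩
      · exact ⟨i, by rw [h1, h2, Sym2.eq_swap]⟩
  have hDadj : ∀ a b, D.Adj a b ↔ T.Adj a b ∧ s(a,b) ∉ S := fun a b =>
    SimpleGraph.deleteEdges_adj
  have hT'adj : ∀ a b, T'.Adj a b ↔
      (T.Adj a b ∧ ¬ s(a,b) ∈ S) ∨ (∃ i, (a = v ∧ b = x i) ∨ (a = x i ∧ b = v)) := by
    intro a b
    rw [hT']
    simp only [SimpleGraph.sup_adj, hDadj, SimpleGraph.fromEdgeSet_adj, Set.mem_range]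
    constructor
    · rintro (⟨h1, h2⟩ | ⟨⟨i, hi⟩, hne⟩)
      · exact Or.inl ⟨h1, h2⟩
      · rcases Sym2.eq_iff.mp hi with ⟨h1, h2⟩ | ⟨h1, h2⟩
        · exact Or.inr ⟨i, Or.inl ⟨h1.symm, h2.symm⟩⟩
        · exact Or.inr ⟨i, Or.inr ⟨h2.symm, h1.symm⟩⟩
    · rintro (⟨h1, h2⟩ | ⟨i, ⟨h1, h2⟩ | ⟨h1, h2⟩⟩)
      · exact Or.inl ⟨h1, h2⟩
      · exact Or.inr ⟨⟨i, by rw [h1, h2]⟩, by rw [h1, h2]; exact fun hc => (hxv i) hc.symm⟩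
      · exact Or.inr ⟨⟨i, by rw [h1, h2, Sym2.eq_swap]⟩, by rw [h1, h2]; exact hxv i⟩
  have hT'gain : ∀ i, T'.Adj v (x i) := fun i =>
    (hT'adj v (x i)).mpr (Or.inr ⟨i, Or.inl ⟨rfl, rfl⟩⟩)
  have hT'lost : ∀ i, ¬ T'.Adj u (x i) := by
    intro i hc
    rcases (hT'adj u (x i)).mp hc with ⟨_, h2⟩ | ⟨j, ⟨h1, _⟩ | ⟨h1, h2⟩⟩
    · exact h2 ((hmemS u (x i)).mpr ⟨i, Or.inl ⟨rfl, rfl⟩⟩)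
    · exact huv h1
    · exact hxu j h1.symm
  -- signs
  obtain ⟨σ, hσv, hσa⟩ := exists_sign hT u
  have hsq : ∀ (τ : V → ℝ), (∀ w, τ w = 1 ∨ τ w = -1) → ∀ w, τ w * τ w = 1 := by
    intro τ hv w; rcases hv w with h | h <;> rw [h] <;> norm_num
  have hσ2 := hsq σ hσv
  have hreach_uv : D.Reachable u v := by
    refine ⟨pv.toDeleteEdges S ?_⟩
    intro e he hemem
    obtain ⟨i, hi⟩ := hemem
    subst hi
    exact hpath ⟨pv, hpv⟩ i (SimpleGraph.Walk.snd_mem_support_of_mem_edges pv he)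
  have hnreach : ∀ i, ¬ D.Reachable u (x i) := by
    intro i hr
    have hbridge := (SimpleGraph.isAcyclic_iff_forall_adj_isBridge.mp hT.2) (hadj i)
    refine SimpleGraph.isBridge_iff.mp hbridge ?_
    refine hr.mono (SimpleGraph.deleteEdges_anti ?_)
    exact Set.singleton_subset_iff.mpr ⟨i, rfl⟩
  set σ' : V → ℝ := fun w => if D.Reachable u w then σ w else (σ u * σ v) * σ w with hσ'def
  have hσ'v : ∀ w, σ' w = 1 ∨ σ' w = -1 := by
    intro w
    simp only [hσ'def]
    split_ifs
    · exact hσv w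
    · rcases hσv u with h1 | h1 <;> rcases hσv v with h2 | h2 <;> rcases hσv w with h3 | h3 <;>
        simp [h1, h2, h3]
  have hσ'2 := hsq σ' hσ'v
  have hσ'a : ∀ a b, T'.Adj a b → σ' a = -σ' b := by
    intro a b hab
    rcases (hT'adj a b).mp hab with ⟨h1, h2⟩ | ⟨i, ⟨h1, h2⟩ | ⟨h1, h2⟩⟩
    · have hDab : D.Adj a b := (hDadj a b).mpr ⟨h1, h2⟩
      have hiff : D.Reachable u a ↔ D.Reachable u b :=
        ⟨fun h => h.trans hDab.reachable, fun h => h.trans hDab.symm.reachable⟩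
      have hs := hσa a b h1
      rw [hσ'def]
      simp only
      by_cases hra : D.Reachable u a
      · rw [if_pos hra, if_pos (hiff.mp hra), hs]
      · rw [if_neg hra, if_neg (fun hc => hra (hiff.mpr hc)), hs]; ring
    · have hxi : σ (x i) = -σ u := by
        have := hσa u (x i) (hadj i); linarith
      rw [h1, h2, hσ'def]
      simp only
      rw [if_pos hreach_uv, if_neg (hnreach i), hxi]
      linear_combination (-σ v) * hσ2 u
    · have hxi : σ (x i) = -σ u := by
        have := hσa u (x i) (hadj i); linarith
      rw [h1, h2, hσ'def]
      simp only
      rw [if_pos hreach_uv, if_neg (hnreach i), hxi]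
      linear_combination (-σ v) * hσ2 u
  -- test vector
  set habs : V → ℝ := fun w => |f w| with habsdef
  set f' : V → ℝ := fun w => σ' w * habs w with hf'def
  have hQpos : 0 < f ⬝ᵥ f := by
    obtain ⟨w, hw⟩ := Function.ne_iff.mp hf
    exact Finset.sum_pos' (fun a _ => mul_self_nonneg (f a))
      ⟨w, Finset.mem_univ w, mul_self_pos.mpr hw⟩
  have hdot1 : habs ⬝ᵥ habs = f ⬝ᵥ f := by
    refine Finset.sum_congr rfl fun a _ => ?_
    simp [habsdef, abs_mul_abs_self]
  have hdot2 : f' ⬝ᵥ f' = f ⬝ᵥ f := by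
    refine Finset.sum_congr rfl fun a _ => ?_
    simp only [hf'def, habsdef]
    rcases hσ'v a with h | h <;> rw [h] <;> simp [abs_mul_abs_self]
  have hub' : ∀ μ : ℝ, (∃ g : V → ℝ, g ≠ 0 ∧ lap T' *ᵥ g = μ • g) → μ ≤ lam' :=
    fun μ hμ => hlam'.2 hμ
  have hray := rayleigh_le (lap_isHermitian T') hub' f'
  have hc1 : f' ⬝ᵥ (lap T' *ᵥ f')
      = (∑ a, ∑ b, if T'.Adj a b then (habs a + habs b)^2 else 0) / 2 := by
    rw [quad_lap]
    congr 1
    refine Finset.sum_congr rfl fun a _ => Finset.sum_congr rfl fun b _ => ?_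
    by_cases hab : T'.Adj a b
    · rw [if_pos hab, if_pos hab]
      have e := hσ'a a b hab
      simp only [hf'def]
      rcases hσ'v a with h1 | h1
      · have h2 : σ' b = -1 := by rw [h1] at e; linarith
        rw [h1, h2]; ring
      · have h2 : σ' b = 1 := by rw [h1] at e; linarith
        rw [h1, h2]; ring
    · rw [if_neg hab, if_neg hab]
  -- pointwise splitting
  have hadjiff : ∀ a b : V, a ≠ u → a ≠ v → (∃ i, b = x i) → (T'.Adj a b ↔ T.Adj a b) := by
    rintro a b hau hav ⟨i, rfl⟩
    rw [hT'adj]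
    constructor
    · rintro (⟨h1, _⟩ | ⟨j, ⟨h1, _⟩ | ⟨_, h2⟩⟩)
      · exact h1
      · exact absurd h1 hav
      · exact absurd h2 (hxv i)
    · intro hadj'
      refine Or.inl ⟨hadj', fun hc => ?_⟩
      rcases (hmemS a (x i)).mp hc with ⟨j, ⟨h1, _⟩ | ⟨_, h2⟩⟩
      · exact hau h1
      · exact hxu i h2
  have hadjiff2 : ∀ a b : V, (¬ ∃ i, b = x i) → (¬ ∃ j, a = x j) →
      (T'.Adj a b ↔ T.Adj a b) := by
    intro a b hbx hax
    rw [hT'adj]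
    constructor
    · rintro (⟨h1, _⟩ | ⟨j, ⟨_, h2⟩ | ⟨h1, _⟩⟩)
      · exact h1
      · exact absurd ⟨j, h2⟩ hbx
      · exact absurd ⟨j, h1⟩ hax
    · intro hadj'
      refine Or.inl ⟨hadj', fun hc => ?_⟩
      rcases (hmemS a b).mp hc with ⟨j, ⟨_, h2⟩ | ⟨h1, _⟩⟩
      · exact hbx ⟨j, h2⟩
      · exact hax ⟨j, h1⟩
  have hadjiff3 : ∀ a b : V, b ≠ u → b ≠ v → (∃ j, a = x j) → (T'.Adj a b ↔ T.Adj a b) := by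
    rintro a b hbu hbv ⟨j, rfl⟩
    rw [hT'adj]
    constructor
    · rintro (⟨h1, _⟩ | ⟨m, ⟨h1, _⟩ | ⟨_, h2⟩⟩)
      · exact h1
      · exact absurd h1 (hxv j)
      · exact absurd h2 hbv
    · intro hadj'
      refine Or.inl ⟨hadj', fun hc => ?_⟩
      rcases (hmemS (x j) b).mp hc with ⟨m, ⟨h1, _⟩ | ⟨_, h2⟩⟩
      · exact hxu j h1
      · exact hbu h2
  have hptsplit : ∀ a b : V,
      (if T'.Adj a b then (habs a + habs b)^2 else 0)
        = (if T.Adj a b then (habs a + habs b)^2 else 0)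
          + ((if a = v ∧ (∃ i, b = x i) then (habs a + habs b)^2 else 0)
            + (if (∃ i, a = x i) ∧ b = v then (habs a + habs b)^2 else 0))
          - ((if a = u ∧ (∃ i, b = x i) then (habs a + habs b)^2 else 0)
            + (if (∃ i, a = x i) ∧ b = u then (habs a + habs b)^2 else 0)) := by
    intro a b
    by_cases hbx : ∃ i, b = x i
    · obtain ⟨i, rfl⟩ := hbx
      by_cases hau : a = u
      · subst hau
        have c1 : ¬(a = v ∧ ∃ j, x i = x j) := fun hc => huv hc.1
        have c2 : ¬((∃ j, a = x j) ∧ x i = v) := fun hc => hxv i hc.2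
        have c3 : a = a ∧ ∃ j, x i = x j := ⟨rfl, ⟨i, rfl⟩⟩
        have c4 : ¬((∃ j, a = x j) ∧ x i = a) := fun hc => hxu i hc.2
        rw [if_pos (hadj i), if_neg (hT'lost i), if_neg c1, if_neg c2, if_pos c3, if_neg c4]
        ring
      · by_cases hav : a = v
        · subst hav
          have c1 : a = a ∧ ∃ j, x i = x j := ⟨rfl, ⟨i, rfl⟩⟩
          have c2 : ¬((∃ j, a = x j) ∧ x i = a) := fun hc => hxv i hc.2
          have c3 : ¬(a = u ∧ ∃ j, x i = x j) := fun hc => huv hc.1.symm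
          have c4 : ¬((∃ j, a = x j) ∧ x i = u) := fun hc => hxu i hc.2
          rw [if_neg (hnadjv i), if_pos (hT'gain i), if_pos c1, if_neg c2, if_neg c3, if_neg c4]
          ring
        · have c1 : ¬(a = v ∧ ∃ j, x i = x j) := fun hc => hav hc.1
          have c2 : ¬((∃ j, a = x j) ∧ x i = v) := fun hc => hxv i hc.2
          have c3 : ¬(a = u ∧ ∃ j, x i = x j) := fun hc => hau hc.1
          have c4 : ¬((∃ j, a = x j) ∧ x i = u) := fun hc => hxu i hc.2
          rw [if_neg c1, if_neg c2, if_neg c3, if_neg c4]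
          by_cases hTab : T.Adj a (x i)
          · rw [if_pos hTab, if_pos ((hadjiff a (x i) hau hav ⟨i, rfl⟩).mpr hTab)]
            ring
          · rw [if_neg hTab, if_neg (fun hc => hTab ((hadjiff a (x i) hau hav ⟨i, rfl⟩).mp hc))]
            ring
    · by_cases hax : ∃ j, a = x j
      · obtain ⟨j, rfl⟩ := hax
        by_cases hbu : b = u
        · have cT : T.Adj (x j) b := by rw [hbu]; exact (hadj j).symm
          have cT' : ¬T'.Adj (x j) b := by
            rw [hbu]; exact fun hc => hT'lost j hc.symm
          have c1 : ¬(x j = v ∧ ∃ m, b = x m) := fun hc => hxv j hc.1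
          have c2 : ¬((∃ m, x j = x m) ∧ b = v) := fun hc => huv (hbu.symm.trans hc.2)
          have c3 : ¬(x j = u ∧ ∃ m, b = x m) := fun hc => hxu j hc.1
          have c4 : (∃ m, x j = x m) ∧ b = u := ⟨⟨j, rfl⟩, hbu⟩
          rw [if_pos cT, if_neg cT', if_neg c1, if_neg c2, if_neg c3, if_pos c4]
          ring
        · by_cases hbv : b = v
          · have cT : ¬T.Adj (x j) b := by
              rw [hbv]; exact fun hc => hnadjv j hc.symm
            have cT' : T'.Adj (x j) b := by rw [hbv]; exact (hT'gain j).symm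
            have c1 : ¬(x j = v ∧ ∃ m, b = x m) := fun hc => hxv j hc.1
            have c2 : (∃ m, x j = x m) ∧ b = v := ⟨⟨j, rfl⟩, hbv⟩
            have c3 : ¬(x j = u ∧ ∃ m, b = x m) := fun hc => hxu j hc.1
            have c4 : ¬((∃ m, x j = x m) ∧ b = u) := fun hc => huv (hc.2.symm.trans hbv)
            rw [if_neg cT, if_pos cT', if_neg c1, if_pos c2, if_neg c3, if_neg c4]
            ring
          · have c1 : ¬(x j = v ∧ ∃ m, b = x m) := fun hc => hxv j hc.1
            have c2 : ¬((∃ m, x j = x m) ∧ b = v) := fun hc => hbv hc.2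
            have c3 : ¬(x j = u ∧ ∃ m, b = x m) := fun hc => hxu j hc.1
            have c4 : ¬((∃ m, x j = x m) ∧ b = u) := fun hc => hbu hc.2
            rw [if_neg c1, if_neg c2, if_neg c3, if_neg c4]
            by_cases hTab : T.Adj (x j) b
            · rw [if_pos hTab, if_pos ((hadjiff3 (x j) b hbu hbv ⟨j, rfl⟩).mpr hTab)]
              ring
            · rw [if_neg hTab,
                if_neg (fun hc => hTab ((hadjiff3 (x j) b hbu hbv ⟨j, rfl⟩).mp hc))]
              ring
      · have c1 : ¬(a = v ∧ ∃ i, b = x i) := fun hc => hbx hc.2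
        have c2 : ¬((∃ i, a = x i) ∧ b = v) := fun hc => hax hc.1
        have c3 : ¬(a = u ∧ ∃ i, b = x i) := fun hc => hbx hc.2
        have c4 : ¬((∃ i, a = x i) ∧ b = u) := fun hc => hax hc.1
        rw [if_neg c1, if_neg c2, if_neg c3, if_neg c4]
        by_cases hTab : T.Adj a b
        · rw [if_pos hTab, if_pos ((hadjiff2 a b hbx hax).mpr hTab)]
          ring
        · rw [if_neg hTab, if_neg (fun hc => hTab ((hadjiff2 a b hbx hax).mp hc))]
          ring
  have hximg : ∀ c : V → ℝ, (∑ b, if (∃ i, b = x i) then c b else 0) = ∑ i, c (x i) := by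
    intro c
    have hmem : ∀ b : V, (∃ i, b = x i) ↔ b ∈ Finset.image x Finset.univ := by
      intro b
      simp [Finset.mem_image, eq_comm]
    rw [Finset.sum_congr rfl fun b _ => if_congr (hmem b) rfl rfl]
    rw [Finset.sum_ite_mem, Finset.univ_inter]
    exact Finset.sum_image fun i _ j _ h => hinj h
  have hrow : ∀ (w : V) (c : V → V → ℝ),
      (∑ a, ∑ b, if a = w ∧ (∃ i, b = x i) then c a b else 0) = ∑ i, c w (x i) := by
    intro w c
    have h1 : ∀ a, (∑ b, if a = w ∧ (∃ i, b = x i) then c a b else 0)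
        = if a = w then (∑ b, if (∃ i, b = x i) then c a b else 0) else 0 := by
      intro a
      by_cases haw : a = w
      · rw [if_pos haw]
        exact Finset.sum_congr rfl fun b _ => by rw [if_congr (and_iff_right haw) rfl rfl]
      · rw [if_neg haw]
        exact Finset.sum_eq_zero fun b _ => if_neg (fun hc => haw hc.1)
    rw [Finset.sum_congr rfl fun a _ => h1 a, Finset.sum_ite_eq' Finset.univ w _,
      if_pos (Finset.mem_univ w), hximg (c w)]
  have hcol : ∀ (w : V) (c : V → V → ℝ),
      (∑ a, ∑ b, if (∃ i, a = x i) ∧ b = w then c a b else 0) = ∑ i, c (x i) w := by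
    intro w c
    have h1 : ∀ a, (∑ b, if (∃ i, a = x i) ∧ b = w then c a b else 0)
        = if (∃ i, a = x i) then c a w else 0 := by
      intro a
      by_cases hax : ∃ i, a = x i
      · rw [if_pos hax,
          Finset.sum_congr rfl fun b _ => if_congr (and_iff_right hax) rfl rfl,
          Finset.sum_ite_eq' Finset.univ w _, if_pos (Finset.mem_univ w)]
      · rw [if_neg hax]
        exact Finset.sum_eq_zero fun b _ => if_neg (fun hc => hax hc.1)
    rw [Finset.sum_congr rfl fun a _ => h1 a, hximg (fun a => c a w)]
  have hsplitsum : (∑ a, ∑ b, if T'.Adj a b then (habs a + habs b)^2 else 0)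
      = (∑ a, ∑ b, if T.Adj a b then (habs a + habs b)^2 else 0)
        + ∑ i, (2*(habs v + habs (x i))^2 - 2*(habs u + habs (x i))^2) := by
    have e1 := hrow v (fun a b => (habs a + habs b)^2)
    have e2 := hcol v (fun a b => (habs a + habs b)^2)
    have e3 := hrow u (fun a b => (habs a + habs b)^2)
    have e4 := hcol u (fun a b => (habs a + habs b)^2)
    calc (∑ a, ∑ b, if T'.Adj a b then (habs a + habs b)^2 else 0)
        = ∑ a, ∑ b, ((if T.Adj a b then (habs a + habs b)^2 else 0)
          + ((if a = v ∧ (∃ i, b = x i) then (habs a + habs b)^2 else 0)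
            + (if (∃ i, a = x i) ∧ b = v then (habs a + habs b)^2 else 0))
          - ((if a = u ∧ (∃ i, b = x i) then (habs a + habs b)^2 else 0)
            + (if (∃ i, a = x i) ∧ b = u then (habs a + habs b)^2 else 0))) :=
          Finset.sum_congr rfl fun a _ => Finset.sum_congr rfl fun b _ => hptsplit a b
      _ = _ := by
          simp only [Finset.sum_add_distrib, Finset.sum_sub_distrib]
          rw [e1, e2, e3, e4, ← Finset.sum_add_distrib, ← Finset.sum_add_distrib,
            add_sub_assoc, ← Finset.sum_sub_distrib, ← Finset.sum_sub_distrib]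
          congr 1
          exact Finset.sum_congr rfl fun i _ => by ring
  have hQSge : (∑ a, ∑ b, if T.Adj a b then (f a - f b)^2 else 0)
      ≤ ∑ a, ∑ b, if T.Adj a b then (habs a + habs b)^2 else 0 := by
    refine Finset.sum_le_sum fun a _ => Finset.sum_le_sum fun b _ => ?_
    by_cases hab : T.Adj a b
    · rw [if_pos hab, if_pos hab]
      simp only [habsdef]
      nlinarith [abs_nonneg (f a), abs_nonneg (f b), neg_abs_le (f a * f b),
        abs_mul (f a) (f b), sq_abs (f a), sq_abs (f b)]
    · rw [if_neg hab, if_neg hab]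
  have hgain : 0 ≤ ∑ i, (2*(habs v + habs (x i))^2 - 2*(habs u + habs (x i))^2) := by
    refine Finset.sum_nonneg fun i _ => ?_
    have h1 : habs u ≤ habs v := hfuv
    have h2 : 0 ≤ habs u := by simp only [habsdef]; positivity
    have h3 : 0 ≤ habs (x i) := by simp only [habsdef]; positivity
    nlinarith
  have hc4 : f ⬝ᵥ (lap T *ᵥ f) = lam * (f ⬝ᵥ f) := by
    rw [hef]
    simp only [dotProduct, Pi.smul_apply, smul_eq_mul, Finset.mul_sum]
    exact Finset.sum_congr rfl fun a _ => by ring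
  have hQF2 : (∑ a, ∑ b, if T.Adj a b then (f a - f b)^2 else 0) / 2 = lam * (f ⬝ᵥ f) := by
    rw [← quad_lap, hc4]
  have hchain1 : lam * (f ⬝ᵥ f) ≤ f' ⬝ᵥ (lap T' *ᵥ f') := by
    rw [hc1, hsplitsum, ← hQF2]
    linarith [hgain, hQSge]
  rw [hdot2] at hray
  have hle : lam ≤ lam' := by
    have h2 : lam * (f ⬝ᵥ f) ≤ lam' * (f ⬝ᵥ f) := le_trans hchain1 hray
    exact le_of_mul_le_mul_right h2 hQpos
  rcases lt_or_eq_of_le hle with hlt | heqq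
  · exact hlt
  · exfalso
    have hEmain : f' ⬝ᵥ (lap T' *ᵥ f') = lam' * (f ⬝ᵥ f) :=
      le_antisymm hray (heqq ▸ hchain1)
    have hQST : (∑ a, ∑ b, if T.Adj a b then (habs a + habs b)^2 else 0) / 2
        = lam * (f ⬝ᵥ f) := by
      have h1 : (∑ a, ∑ b, if T.Adj a b then (habs a + habs b)^2 else 0) / 2
          ≥ lam * (f ⬝ᵥ f) := by rw [← hQF2]; linarith [hQSge]
      have h2 := hEmain
      rw [hc1, hsplitsum, ← heqq] at h2
      linarith [hgain]
    have hB1 : lap T' *ᵥ f' = lam' • f' :=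
      eigen_of_rayleigh_eq (lap_isHermitian T') hub' f' (by rw [hdot2]; exact hEmain)
    have hσ'f' : σ' * f' = habs := by
      funext w
      simp only [Pi.mul_apply, hf'def]
      rcases hσ'v w with h | h <;> rw [h] <;> ring
    have hB2 : qmat T' *ᵥ habs = lam' • habs := by
      have h2 := mulVec_conj hσ'2 (fun a b => qmat_eq_conj_lap hσ'2 hσ'a a b) hB1
      rwa [hσ'f'] at h2
    have hubQ : ∀ μ : ℝ, (∃ g : V → ℝ, g ≠ 0 ∧ qmat T *ᵥ g = μ • g) → μ ≤ lam := by
      rintro μ ⟨g, hg0, hgeq⟩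
      have hconj := mulVec_conj hσ2 (fun a b => lap_eq_conj_qmat hσ2 hσa a b) hgeq
      refine hlam.2 ⟨σ * g, ?_, hconj⟩
      intro hc
      apply hg0
      funext w
      have h3 := congrFun hc w
      simp only [Pi.mul_apply, Pi.zero_apply] at h3 ⊢
      rcases hσv w with h | h <;> rw [h] at h3 <;> linarith
    have hQdot : habs ⬝ᵥ (qmat T *ᵥ habs) = lam * (habs ⬝ᵥ habs) := by
      rw [quad_qmat, hdot1, hQST]
    have hB3 : qmat T *ᵥ habs = lam • habs :=
      eigen_of_rayleigh_eq (qmat_isHermitian T) hubQ habs hQdot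
    have hub_adj : ∀ b : V, T'.Adj u b ↔ (T.Adj u b ∧ ¬ ∃ i, b = x i) := by
      intro b
      rw [hT'adj]
      constructor
      · rintro (⟨h1, h2⟩ | ⟨i, ⟨h1, _⟩ | ⟨h1, _⟩⟩)
        · exact ⟨h1, fun hc => h2 ((hmemS u b).mpr ⟨hc.choose, Or.inl ⟨rfl, hc.choose_spec⟩⟩)⟩
        · exact absurd h1 huv
        · exact absurd h1.symm (hxu i)
      · rintro ⟨h1, h2⟩
        refine Or.inl ⟨h1, fun hc => ?_⟩
        rcases (hmemS u b).mp hc with ⟨i, ⟨_, hb⟩ | ⟨hu', _⟩⟩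
        · exact h2 ⟨i, hb⟩
        · exact hxu i hu'.symm
    have hsplitn : ∀ c : V → ℝ, (∑ b, if T.Adj u b then c b else 0)
        = (∑ b, if T'.Adj u b then c b else 0) + ∑ i, c (x i) := by
      intro c
      rw [← hximg c, ← Finset.sum_add_distrib]
      refine Finset.sum_congr rfl fun b _ => ?_
      by_cases hbx : ∃ i, b = x i
      · obtain ⟨i, rfl⟩ := hbx
        rw [if_pos (hadj i), if_neg (hT'lost i), if_pos ⟨i, rfl⟩]
        ring
      · rw [if_neg hbx]
        by_cases hTb : T.Adj u b
        · rw [if_pos hTb, if_pos ((hub_adj b).mpr ⟨hTb, hbx⟩)]; ring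
        · rw [if_neg hTb, if_neg (fun hc => hTb ((hub_adj b).mp hc).1)]; ring
    have hQu := congrFun hB3 u
    have hQ'u := congrFun hB2 u
    rw [qmat_mulVec_apply] at hQu hQ'u
    have hkk : ∑ _i : Fin k, (1:ℝ) = (k:ℝ) := by simp
    have hxnn : 0 ≤ ∑ i, habs (x i) :=
      Finset.sum_nonneg fun i _ => by simp only [habsdef]; positivity
    have hunn : 0 ≤ habs u := by simp only [habsdef]; positivity
    have e1 : (lam • habs) u = lam * habs u := rfl
    have e2 : (lam' • habs) u = lam' * habs u := rfl
    rw [e1, hsplitn (fun _ => (1:ℝ)), hkk, hsplitn (fun b => habs b)] at hQu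
    rw [e2, ← heqq] at hQ'u
    have hku : (k:ℝ) * habs u + (∑ i, habs (x i)) = 0 := by
      linear_combination hQu - hQ'u
    have hkpos : (0:ℝ) < (k:ℝ) := by
      have : 0 < k := hk
      exact_mod_cast this
    have hu0 : habs u = 0 := by
      have hs0 : (k:ℝ) * habs u ≤ 0 := by linarith [hku, hxnn]
      have hs1 : 0 ≤ (k:ℝ) * habs u := mul_nonneg (le_of_lt hkpos) hunn
      have hs2 : (k:ℝ) * habs u = 0 := le_antisymm hs0 hs1
      exact (mul_eq_zero.mp hs2).resolve_left (ne_of_gt hkpos)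
    have hzero : ∀ a b : V, T.Adj a b → habs a = 0 → habs b = 0 := by
      intro a b hab ha0
      have hQa := congrFun hB3 a
      rw [qmat_mulVec_apply] at hQa
      have e3 : (lam • habs) a = lam * habs a := rfl
      rw [e3, ha0] at hQa
      have hsum0 : ∑ b', (if T.Adj a b' then habs b' else 0) = 0 := by
        have := hQa
        linarith [hQa]
      have hnn : ∀ b' ∈ Finset.univ, (0:ℝ) ≤ (if T.Adj a b' then habs b' else 0) := by
        intro b' _
        split_ifs
        · simp only [habsdef]; positivity
        · exact le_refl 0
      have hterm := (Finset.sum_eq_zero_iff_of_nonneg hnn).mp hsum0 b (Finset.mem_univ b)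
      rwa [if_pos hab] at hterm
    have hwalk : ∀ (a b : V) (p : T.Walk a b), habs a = 0 → habs b = 0 := by
      intro a b p
      induction p with
      | nil => exact id
      | cons h q ih => exact fun h0 => ih (hzero _ _ h h0)
    have hall : ∀ w, habs w = 0 := fun w =>
      (hT.isConnected.preconnected u w).elim fun p => hwalk u w p hu0
    apply hf
    funext w
    exact abs_eq_zero.mp (hall w)
end

section
/- There exists a tree with degree sequence π = (4,4,2,1,1,1,1,1,1) (on 9 vertices) that admits no BFD-ordering; specifically, the tree consisting of two vertices of degree 4 joined by a path of length 2 through a degree-2 vertex, each degree-4 vertex additionally adjacent to three leaves, is not a BFD-tree. -/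
open SimpleGraph Finset

/-- `lt` is a BFD-ordering of the connected graph `T` with root `v₀`:
a (strict, total, hence well-) ordering of the vertices with least element `v₀` such that
(B1) if `w₁ ≺ w₂` then every child `v₁` of `w₁` precedes every child `v₂` of `w₂`
(children taken w.r.t. the breadth-first layer structure from `v₀`, i.e. `v` is a child
of `w` if `w ~ v` and `dist v₀ v = dist v₀ w + 1`), and
(B2) `v ≺ u` implies `deg v ≥ deg u`. -/
def IsBFDOrdering {V : Type*} [Fintype V] [DecidableEq V] (T : SimpleGraph V) (v₀ : V)
    (lt : V → V → Prop) : Prop :=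
  IsStrictTotalOrder V lt ∧
  (∀ v : V, v ≠ v₀ → lt v₀ v) ∧
  (∀ w₁ w₂ v₁ v₂ : V, lt w₁ w₂ →
      T.Adj w₁ v₁ → T.dist v₀ v₁ = T.dist v₀ w₁ + 1 →
      T.Adj w₂ v₂ → T.dist v₀ v₂ = T.dist v₀ w₂ + 1 →
      lt v₁ v₂) ∧
  (∀ v u : V, lt v u → gdeg T u ≤ gdeg T v)

/-- A BFD-tree: a tree admitting a BFD-ordering for some root. -/
def IsBFDTree {V : Type*} [Fintype V] [DecidableEq V] (T : SimpleGraph V) : Prop :=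
  T.IsTree ∧ ∃ (v₀ : V) (lt : V → V → Prop), IsBFDOrdering T v₀ lt

/- ### Auxiliary development -/

/-- The concrete tree in question. -/
def myG : SimpleGraph (Fin 9) := SimpleGraph.fromEdgeSet
          ({s((0 : Fin 9), 1), s(0, 2), s(1, 3), s(1, 4), s(1, 5),
            s(2, 6), s(2, 7), s(2, 8)} : Set (Sym2 (Fin 9)))

/-- Decidable description of the adjacency relation of `myG`. -/
def adjFun : Fin 9 → Fin 9 → Prop := fun a b =>
    ((a = 0 ∧ b = 1) ∨ (a = 1 ∧ b = 0) ∨ (a = 0 ∧ b = 2) ∨ (a = 2 ∧ b = 0) ∨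
     (a = 1 ∧ b = 3) ∨ (a = 3 ∧ b = 1) ∨ (a = 1 ∧ b = 4) ∨ (a = 4 ∧ b = 1) ∨
     (a = 1 ∧ b = 5) ∨ (a = 5 ∧ b = 1) ∨
     (a = 2 ∧ b = 6) ∨ (a = 6 ∧ b = 2) ∨ (a = 2 ∧ b = 7) ∨ (a = 7 ∧ b = 2) ∨
     (a = 2 ∧ b = 8) ∨ (a = 8 ∧ b = 2))

instance adjFun.decRel : DecidableRel adjFun := fun a b => by unfold adjFun; infer_instance

lemma myG_adj (a b : Fin 9) : myG.Adj a b ↔ adjFun a b := by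
  have key : ∀ x y : Fin 9,
      ((s(x,y) = s((0:Fin 9),1) ∨ s(x,y) = s(0,2) ∨ s(x,y) = s(1,3) ∨ s(x,y) = s(1,4) ∨
        s(x,y) = s(1,5) ∨ s(x,y) = s(2,6) ∨ s(x,y) = s(2,7) ∨ s(x,y) = s(2,8)) ∧ x ≠ y)
      ↔ adjFun x y := by decide
  rw [myG, fromEdgeSet_adj]
  rw [← key a b]
  simp [Set.mem_insert_iff]

lemma adj' (a b : Fin 9) (h : adjFun a b) : myG.Adj a b := (myG_adj a b).mpr h

lemma reach_color {V : Type*} {H : SimpleGraph V} (f : V → Bool)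
    (hf : ∀ a b, H.Adj a b → f a = f b) {u v : V} (h : H.Reachable u v) : f u = f v := by
  obtain ⟨p⟩ := h
  induction p with
  | nil => rfl
  | cons h p ih => exact (hf _ _ h).trans ih

lemma bridge_helper (u v : Fin 9) (f : Fin 9 → Bool) (hadj : adjFun u v) (hne : f u ≠ f v)
    (hf : ∀ a b : Fin 9, adjFun a b → ¬(s(a,b) = s(u,v) ∧ a ≠ b) → f a = f b) :
    myG.IsBridge s(u,v) := by
  rw [isBridge_iff]
  refine fun hr => hne ?_
  refine reach_color f ?_ hr
  intro a b hab
  rw [deleteEdges_adj, myG_adj, Set.mem_singleton_iff] at hab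
  exact hf a b hab.1 (fun hh => hab.2 hh.1)

lemma myG_acyclic : myG.IsAcyclic := by
  rw [isAcyclic_iff_forall_adj_isBridge]
  intro v w h
  rw [myG_adj] at h
  unfold adjFun at h
  rcases h with ⟨rfl,rfl⟩|⟨rfl,rfl⟩|⟨rfl,rfl⟩|⟨rfl,rfl⟩|⟨rfl,rfl⟩|⟨rfl,rfl⟩|⟨rfl,rfl⟩|⟨rfl,rfl⟩|⟨rfl,rfl⟩|⟨rfl,rfl⟩|⟨rfl,rfl⟩|⟨rfl,rfl⟩|⟨rfl,rfl⟩|⟨rfl,rfl⟩|⟨rfl,rfl⟩|⟨rfl,rfl⟩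
  · exact bridge_helper 0 1 (fun x => decide (x = 1 ∨ x = 3 ∨ x = 4 ∨ x = 5)) (by decide) (by decide) (by decide)
  · exact bridge_helper 1 0 (fun x => decide (x = 1 ∨ x = 3 ∨ x = 4 ∨ x = 5)) (by decide) (by decide) (by decide)
  · exact bridge_helper 0 2 (fun x => decide (x = 2 ∨ x = 6 ∨ x = 7 ∨ x = 8)) (by decide) (by decide) (by decide)
  · exact bridge_helper 2 0 (fun x => decide (x = 2 ∨ x = 6 ∨ x = 7 ∨ x = 8)) (by decide) (by decide) (by decide)
  · exact bridge_helper 1 3 (fun x => decide (x = 3)) (by decide) (by decide) (by decide)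
  · exact bridge_helper 3 1 (fun x => decide (x = 3)) (by decide) (by decide) (by decide)
  · exact bridge_helper 1 4 (fun x => decide (x = 4)) (by decide) (by decide) (by decide)
  · exact bridge_helper 4 1 (fun x => decide (x = 4)) (by decide) (by decide) (by decide)
  · exact bridge_helper 1 5 (fun x => decide (x = 5)) (by decide) (by decide) (by decide)
  · exact bridge_helper 5 1 (fun x => decide (x = 5)) (by decide) (by decide) (by decide)
  · exact bridge_helper 2 6 (fun x => decide (x = 6)) (by decide) (by decide) (by decide)
  · exact bridge_helper 6 2 (fun x => decide (x = 6)) (by decide) (by decide) (by decide)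
  · exact bridge_helper 2 7 (fun x => decide (x = 7)) (by decide) (by decide) (by decide)
  · exact bridge_helper 7 2 (fun x => decide (x = 7)) (by decide) (by decide) (by decide)
  · exact bridge_helper 2 8 (fun x => decide (x = 8)) (by decide) (by decide) (by decide)
  · exact bridge_helper 8 2 (fun x => decide (x = 8)) (by decide) (by decide) (by decide)

lemma reach0 (v : Fin 9) : myG.Reachable 0 v := by
  have r1 : myG.Reachable 0 1 := (adj' 0 1 (by decide)).reachable
  have r2 : myG.Reachable 0 2 := (adj' 0 2 (by decide)).reachable
  fin_cases v
  · rfl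
  · exact r1
  · exact r2
  · exact r1.trans (adj' 1 3 (by decide)).reachable
  · exact r1.trans (adj' 1 4 (by decide)).reachable
  · exact r1.trans (adj' 1 5 (by decide)).reachable
  · exact r2.trans (adj' 2 6 (by decide)).reachable
  · exact r2.trans (adj' 2 7 (by decide)).reachable
  · exact r2.trans (adj' 2 8 (by decide)).reachable

lemma myG_connected : myG.Connected := by
  rw [connected_iff]
  exact ⟨fun u v => (reach0 u).symm.trans (reach0 v), ⟨0⟩⟩

lemma myG_tree : myG.IsTree := ⟨myG_connected, myG_acyclic⟩

lemma nbhd (v : Fin 9) (s : Finset (Fin 9)) (h : ∀ w, adjFun v w ↔ w ∈ s) :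
    gdeg myG v = s.card := by
  have : myG.neighborSet v = ↑s := by
    ext w; rw [mem_neighborSet, myG_adj]; exact (h w).trans (Finset.mem_coe).symm
  rw [gdeg, this, Set.ncard_coe_finset]

lemma hdeg : ∀ v, gdeg myG v = ![2,4,4,1,1,1,1,1,1] v := by
  intro v
  fin_cases v
  · exact nbhd 0 {1,2} (by decide)
  · exact nbhd 1 {0,3,4,5} (by decide)
  · exact nbhd 2 {0,6,7,8} (by decide)
  · exact nbhd 3 {1} (by decide)
  · exact nbhd 4 {1} (by decide)
  · exact nbhd 5 {1} (by decide)
  · exact nbhd 6 {2} (by decide)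
  · exact nbhd 7 {2} (by decide)
  · exact nbhd 8 {2} (by decide)

lemma dist_le_one_of_adj {u v : Fin 9} (h : adjFun u v) : myG.dist u v = 1 :=
  dist_eq_one_iff_adj.mpr (adj' u v h)

lemma myG_dist_two (u v w : Fin 9) (hne : u ≠ v) (hnadj : ¬adjFun u v)
    (h1 : adjFun u w) (h2 : adjFun w v) : myG.dist u v = 2 := by
  have hub : myG.dist u v ≤ 2 := by
    calc myG.dist u v ≤ myG.dist u w + myG.dist w v := myG_connected.dist_triangle
    _ ≤ 2 := by rw [dist_le_one_of_adj h1, dist_le_one_of_adj h2]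
  have h0 : myG.dist u v ≠ 0 := fun h => hne (myG_connected.dist_eq_zero_iff.mp h)
  have h1' : myG.dist u v ≠ 1 := fun h => hnadj ((myG_adj u v).mp (dist_eq_one_iff_adj.mp h))
  omega

lemma myG_dist_three (u v a b : Fin 9) (hne : u ≠ v) (hnadj : ¬adjFun u v)
    (hno2 : ∀ w, ¬(adjFun u w ∧ adjFun w v))
    (h1 : adjFun u a) (h2 : adjFun a b) (h3 : adjFun b v) : myG.dist u v = 3 := by
  have hub : myG.dist u v ≤ 3 := by
    calc myG.dist u v ≤ myG.dist u a + myG.dist a v := myG_connected.dist_triangle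
    _ ≤ myG.dist u a + (myG.dist a b + myG.dist b v) :=
        Nat.add_le_add_left myG_connected.dist_triangle _
    _ ≤ 3 := by rw [dist_le_one_of_adj h1, dist_le_one_of_adj h2, dist_le_one_of_adj h3]
  have h0 : myG.dist u v ≠ 0 := fun h => hne (myG_connected.dist_eq_zero_iff.mp h)
  have h1' : myG.dist u v ≠ 1 := fun h => hnadj ((myG_adj u v).mp (dist_eq_one_iff_adj.mp h))
  have h2' : myG.dist u v ≠ 2 := by
    intro h
    have hr : myG.Reachable u v := (reach0 u).symm.trans (reach0 v)
    obtain ⟨p, hp⟩ := hr.exists_walk_length_eq_dist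
    rw [h] at hp
    cases p with
    | nil => simp at hp
    | cons hadj q =>
      cases q with
      | nil => simp at hp
      | cons hadj' q' =>
        simp [Walk.length_cons] at hp
        have := Walk.eq_of_length_eq_zero (Walk.nil_iff_length_eq.mp hp)
        subst this
        exact hno2 _ ⟨(myG_adj _ _).mp hadj, (myG_adj _ _).mp hadj'⟩
  omega

lemma myG_not_BFD : ¬ IsBFDTree myG := by
  rintro ⟨-, v₀, lt, hSTO, hroot, hB1, hB2⟩
  -- the root must have maximal degree, hence be vertex 1 or 2
  have hv : v₀ = 1 ∨ v₀ = 2 := by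
    by_contra h
    push_neg at h
    have h1 : lt v₀ 1 := hroot 1 (fun hh => h.1 hh.symm)
    have hle : (4 : ℕ) ≤ gdeg myG v₀ := by
      have := hB2 v₀ 1 h1
      rwa [hdeg 1] at this
    rw [hdeg] at hle
    fin_cases v₀
    · revert hle; decide
    · exact h.1 rfl
    · exact h.2 rfl
    all_goals revert hle; decide
  rcases hv with rfl | rfl
  · -- root 1
    have d10 : myG.dist 1 0 = 1 := dist_le_one_of_adj (by decide)
    have d12 : myG.dist 1 2 = 2 := myG_dist_two 1 2 0 (by decide) (by decide) (by decide) (by decide)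
    have d16 : myG.dist 1 6 = 3 :=
      myG_dist_three 1 6 0 2 (by decide) (by decide) (by decide) (by decide) (by decide) (by decide)
    have h20 : lt 2 0 := by
      rcases (@trichotomous _ lt hSTO.toTrichotomous 0 2) with h | h | h
      · have := hB2 0 2 h
        rw [hdeg 0, hdeg 2] at this
        exact absurd this (by decide)
      · exact absurd h (by decide)
      · exact h
    have h62 : lt 6 2 :=
      hB1 2 0 6 2 h20 (adj' 2 6 (by decide)) (by rw [d16, d12]) (adj' 0 2 (by decide))
        (by rw [d12, d10])
    have := hB2 6 2 h62
    rw [hdeg 6, hdeg 2] at this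
    exact absurd this (by decide)
  · -- root 2
    have d20 : myG.dist 2 0 = 1 := dist_le_one_of_adj (by decide)
    have d21 : myG.dist 2 1 = 2 := myG_dist_two 2 1 0 (by decide) (by decide) (by decide) (by decide)
    have d23 : myG.dist 2 3 = 3 :=
      myG_dist_three 2 3 0 1 (by decide) (by decide) (by decide) (by decide) (by decide) (by decide)
    have h10 : lt 1 0 := by
      rcases (@trichotomous _ lt hSTO.toTrichotomous 0 1) with h | h | h
      · have := hB2 0 1 h
        rw [hdeg 0, hdeg 1] at this
        exact absurd this (by decide)
      · exact absurd h (by decide)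
      · exact h
    have h31 : lt 3 1 :=
      hB1 1 0 3 1 h10 (adj' 1 3 (by decide)) (by rw [d23, d21]) (adj' 0 1 (by decide))
        (by rw [d21, d20])
    have := hB2 3 1 h31
    rw [hdeg 3, hdeg 1] at this
    exact absurd this (by decide)

/-- The tree consisting of two degree-4 vertices `1, 2` joined through the
degree-2 vertex `0`, with three leaves attached to each of `1` and `2`, is a
tree with degree sequence `(4,4,2,1,1,1,1,1,1)` that is not a BFD-tree. -/
theorem stmt10 :
    ∃ G : SimpleGraph (Fin 9),
      G = SimpleGraph.fromEdgeSet
          ({s((0 : Fin 9), 1), s(0, 2), s(1, 3), s(1, 4), s(1, 5),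
            s(2, 6), s(2, 7), s(2, 8)} : Set (Sym2 (Fin 9))) ∧
      G.IsTree ∧
      (∃ σ : Equiv.Perm (Fin 9), ∀ i, gdeg G (σ i) = ![4, 4, 2, 1, 1, 1, 1, 1, 1] i) ∧
      ¬ IsBFDTree G := by
  refine ⟨myG, rfl, myG_tree, ⟨(Equiv.swap 0 1).trans (Equiv.swap 0 2), ?_⟩, myG_not_BFD⟩
  have hσ : ∀ i : Fin 9, ((Equiv.swap 0 1).trans (Equiv.swap 0 2)) i
      = ![1,2,0,3,4,5,6,7,8] i := by decide
  have key : ∀ i : Fin 9,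
      ![2,4,4,1,1,1,1,1,1] (![1,2,0,3,4,5,6,7,8] i) = ![4,4,2,1,1,1,1,1,1] i := by decide
  intro i
  rw [hσ i, hdeg, key i]
end

section
/- The degree sequence π_{n,k} = (k, 2, ..., 2, 1, ..., 1) (one entry k, n-k-1 entries 2, and k entries 1) is maximal with respect to ⊲ among all non-increasing tree degree sequences of length n with exactly k entries equal to 1: every such sequence π with π ≠ π_{n,k} satisfies π ⊲ π_{n,k}. -/
open SimpleGraph Finset

/-- The sequence `π_{n,k} = (k, 2, …, 2, 1, …, 1)` (with `n-k-1` twos and `k`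
ones) is maximal w.r.t. `⊲` among non-increasing tree degree sequences of
length `n` with exactly `k` entries equal to `1`. -/
theorem stmt17 (n k : ℕ) (hk2 : 2 ≤ k) (hkn : k ≤ n - 1) (π : Fin n → ℕ)
    (hpos : ∀ i, 0 < π i) (hmono : ∀ i j : Fin n, i ≤ j → π j ≤ π i)
    (hsum : ∑ i, π i = 2 * (n - 1))
    (hones : (Finset.univ.filter fun i => π i = 1).card = k)
    (hne : π ≠ fun i : Fin n =>
      if (i : ℕ) = 0 then k else if (i : ℕ) < n - k then 2 else 1) :
    ∀ j : Fin n, ∑ i ∈ Finset.Iic j, π i ≤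
      ∑ i ∈ Finset.Iic j,
        (if (i : ℕ) = 0 then k else if (i : ℕ) < n - k then 2 else 1) := by
  intro j
  set σ : Fin n → ℕ :=
    fun i => if (i : ℕ) = 0 then k else if (i : ℕ) < n - k then 2 else 1 with hσ
  have hn : k + 1 ≤ n := by omega
  -- entries beyond n-k are 1
  have hA : ∀ i : Fin n, n - k ≤ (i : ℕ) → π i = 1 := by
    intro i hi
    by_contra h
    have h2 : 2 ≤ π i := by have := hpos i; omega
    have hsub : (Finset.univ.filter fun t => π t = 1) ⊆ Finset.Ioi i := by
      intro t ht
      simp only [Finset.mem_filter] at ht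
      rw [Finset.mem_Ioi]
      by_contra hle
      push_neg at hle
      have := hmono t i hle
      omega
    have hc := Finset.card_le_card hsub
    rw [hones, Fin.card_Ioi] at hc
    have := i.isLt
    omega
  -- entries before n-k are at least 2
  have hB : ∀ i : Fin n, (i : ℕ) < n - k → 2 ≤ π i := by
    intro i hi
    by_contra h
    have h1 : π i = 1 := by have := hpos i; omega
    have hsub : Finset.Ici i ⊆ (Finset.univ.filter fun t => π t = 1) := by
      intro t ht
      rw [Finset.mem_Ici] at ht
      simp only [Finset.mem_filter, Finset.mem_univ, true_and]
      have := hmono i t ht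
      have := hpos t
      omega
    have hc := Finset.card_le_card hsub
    rw [hones, Fin.card_Ici] at hc
    have := i.isLt
    omega
  -- pointwise bound away from index 0
  have hpt : ∀ i : Fin n, (i : ℕ) ≠ 0 → σ i ≤ π i := by
    intro i hi
    rw [hσ]
    simp only [if_neg hi]
    split_ifs with h
    · exact hB i h
    · have := hA i (by omega)
      omega
  -- total sum of σ
  have hσsum : ∑ i, σ i = 2 * (n - 1) := by
    have hrange : ∑ i, σ i =
        ∑ i ∈ Finset.range n, (if i = 0 then k else if i < n - k then 2 else 1) :=
      Fin.sum_univ_eq_sum_range (fun i => if i = 0 then k else if i < n - k then 2 else 1) n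
    rw [hrange, Finset.range_eq_Ico,
      ← Finset.sum_Ico_consecutive _ (Nat.zero_le (n - k)) (by omega : n - k ≤ n)]
    have e1 : ∑ i ∈ Finset.Ico 0 (n - k), (if i = 0 then k else if i < n - k then 2 else 1)
        = 2 * (n - k) + (k - 2) := by
      rw [show Finset.Ico 0 (n - k) = Finset.range (n - k) by
        rw [Finset.range_eq_Ico]]
      have : ∀ i ∈ Finset.range (n - k),
          (if i = 0 then k else if i < n - k then 2 else 1)
            = 2 + (if i = 0 then k - 2 else 0) := by
        intro i hi
        rw [Finset.mem_range] at hi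
        split_ifs <;> omega
      rw [Finset.sum_congr rfl this, Finset.sum_add_distrib, Finset.sum_const,
        Finset.sum_ite_eq' (Finset.range (n - k)) 0 (fun _ => k - 2),
        if_pos (by rw [Finset.mem_range]; omega), Finset.card_range]
      ring
    have e2 : ∑ i ∈ Finset.Ico (n - k) n, (if i = 0 then k else if i < n - k then 2 else 1)
        = k := by
      have : ∀ i ∈ Finset.Ico (n - k) n,
          (if i = 0 then k else if i < n - k then 2 else 1) = 1 := by
        intro i hi
        rw [Finset.mem_Ico] at hi
        split_ifs <;> omega
      rw [Finset.sum_congr rfl this, Finset.sum_const, Nat.card_Ico, smul_eq_mul,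
        mul_one]
      omega
    rw [e1, e2]
    omega
  -- compare tail sums
  have key : ∑ i ∈ (Finset.Iic j)ᶜ, σ i ≤ ∑ i ∈ (Finset.Iic j)ᶜ, π i := by
    apply Finset.sum_le_sum
    intro i hi
    apply hpt
    rw [Finset.mem_compl, Finset.mem_Iic] at hi
    have : j < i := lt_of_not_ge hi
    have : (j : ℕ) < (i : ℕ) := this
    omega
  have t1 : (∑ i ∈ Finset.Iic j, π i) + ∑ i ∈ (Finset.Iic j)ᶜ, π i = 2 * (n - 1) := by
    rw [Finset.sum_add_sum_compl, hsum]
  have t2 : (∑ i ∈ Finset.Iic j, σ i) + ∑ i ∈ (Finset.Iic j)ᶜ, σ i = 2 * (n - 1) := by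
    rw [Finset.sum_add_sum_compl, hσsum]
  show (∑ i ∈ Finset.Iic j, π i) ≤ ∑ i ∈ Finset.Iic j, σ i
  omega
end

section
/- If T' is a tree obtained from a tree T by adding a new pendant vertex (a new vertex joined by an edge to an existing vertex of T), then λ(T') > λ(T), where λ denotes the largest Laplacian eigenvalue. -/
open SimpleGraph Finset Matrix

/-- The tree obtained from `T` by attaching a new pendant vertex to `v₀ ∈ V(T)`. -/
def addLeaf {V : Type*} (T : SimpleGraph V) (v₀ : V) : SimpleGraph (Option V) :=
  SimpleGraph.fromEdgeSet
    ({s((none : Option V), some v₀)} ∪ (Sym2.map (some : V → Option V)) '' T.edgeSet)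

set_option linter.unusedSectionVars false
set_option linter.unusedVariables false
set_option linter.unreachableTactic false
set_option linter.unusedTactic false

open scoped Classical in
/-- The signless Laplacian `D + A`. -/
noncomputable def sless {V : Type*} [Fintype V] [DecidableEq V] (G : SimpleGraph V) :
    Matrix V V ℝ :=
  Matrix.of fun u v =>
    (if u = v then (gdeg G u : ℝ) else 0) + (if G.Adj u v then 1 else 0)

section Graph
variable {V : Type*} [Fintype V] [DecidableEq V] {G T : SimpleGraph V}

lemma sless_herm (G : SimpleGraph V) : (sless G).IsHermitian := by
  ext u v
  simp only [sless, conjTranspose_apply, Matrix.of_apply, star_trivial]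
  by_cases h : u = v
  · subst h; rfl
  · rw [if_neg h, if_neg (Ne.symm h)]
    by_cases ha : G.Adj u v
    · rw [if_pos ha, if_pos ha.symm]
    · rw [if_neg ha, if_neg fun hc => ha hc.symm]

lemma sless_nonneg (G : SimpleGraph V) (u v : V) : 0 ≤ sless G u v := by
  simp only [sless, Matrix.of_apply]
  positivity

lemma sless_eq_conj (σ : V → ℝ) (hσ1 : ∀ v, σ v * σ v = 1)
    (hσ2 : ∀ u v, G.Adj u v → σ u * σ v = -1) (u v : V) :
    sless G u v = σ u * lap G u v * σ v := by
  simp only [sless, lap, Matrix.of_apply]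
  by_cases h : u = v
  · subst h
    simp only [if_pos rfl, if_true, if_neg G.irrefl, sub_zero, add_zero]
    nlinarith [hσ1 u]
  · rw [if_neg h]
    by_cases ha : G.Adj u v
    · rw [if_pos ha]
      have := hσ2 u v ha; nlinarith
    · rw [if_neg ha]; ring

lemma lap_eq_conj (σ : V → ℝ) (hσ1 : ∀ v, σ v * σ v = 1)
    (hσ2 : ∀ u v, G.Adj u v → σ u * σ v = -1) (u v : V) :
    lap G u v = σ u * sless G u v * σ v := by
  rw [sless_eq_conj σ hσ1 hσ2 u v]
  have h3 : σ u * (σ u * lap G u v * σ v) * σ v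
      = (σ u * σ u) * (σ v * σ v) * lap G u v := by ring
  rw [h3, hσ1 u, hσ1 v, one_mul, one_mul]

lemma mulVec_sign {A B : Matrix V V ℝ} (σ : V → ℝ) (hσ : ∀ v, σ v * σ v = 1)
    (hAB : ∀ u v, B u v = σ u * A u v * σ v) {μ : ℝ} {f : V → ℝ}
    (hf : A *ᵥ f = μ • f) :
    B *ᵥ (fun v => σ v * f v) = μ • (fun v => σ v * f v) := by
  funext u
  have h1 : (A *ᵥ f) u = μ * f u := by rw [hf]; rfl
  have h2 : (A *ᵥ f) u = ∑ v, A u v * f v := rfl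
  calc (B *ᵥ fun v => σ v * f v) u = ∑ v, B u v * (σ v * f v) := rfl
    _ = ∑ v, σ u * (A u v * f v) * (σ v * σ v) := by
        refine Finset.sum_congr rfl fun v _ => ?_
        rw [hAB]; ring
    _ = ∑ v, σ u * (A u v * f v) := by
        refine Finset.sum_congr rfl fun v _ => ?_
        rw [hσ v, mul_one]
    _ = σ u * ∑ v, A u v * f v := by rw [Finset.mul_sum]
    _ = σ u * (μ * f u) := by rw [← h2, h1]
    _ = (μ • fun v => σ v * f v) u := by
        simp only [Pi.smul_apply, smul_eq_mul]; ring

lemma sgnmul_ne_zero (σ : V → ℝ) (hσ : ∀ v, σ v * σ v = 1)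
    {f : V → ℝ} (hf : f ≠ 0) : (fun v => σ v * f v) ≠ 0 := by
  intro h0
  apply hf
  funext v
  have : σ v * f v = 0 := congrFun h0 v
  have h1 := hσ v
  by_cases hz : σ v = 0
  · rw [hz, mul_zero] at h1; norm_num at h1
  · exact (mul_eq_zero.1 this).resolve_left hz

end Graph

section TreeSign
variable {V : Type*} [DecidableEq V] {T : SimpleGraph V}

/-- In a tree, the distances from a root to two adjacent vertices differ. -/
lemma tree_dist_ne (hT : T.IsTree) (r : V) {u w : V} (h : T.Adj u w) :
    T.dist r u ≠ T.dist r w := by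
  intro he
  obtain ⟨p, hp, hpl⟩ := (hT.isConnected.preconnected r u).exists_path_of_dist
  by_cases hw : w ∈ p.support
  · have hspec := p.take_spec hw
    have hlen : (p.takeUntil w hw).length + (p.dropUntil w hw).length = p.length := by
      rw [← SimpleGraph.Walk.length_append, hspec]
    have h1 : T.dist r w ≤ (p.takeUntil w hw).length := SimpleGraph.dist_le _
    have h2 : (p.dropUntil w hw).length = 0 := by omega
    have h3 : w = u := SimpleGraph.Walk.eq_of_length_eq_zero h2
    exact T.irrefl (h3 ▸ h)
  · obtain ⟨q, hq', hql⟩ := (hT.isConnected.preconnected r w).exists_path_of_dist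
    have hp2 : (p.concat h).IsPath := by
      rw [SimpleGraph.Walk.isPath_def, SimpleGraph.Walk.support_concat]
      exact List.concat_eq_append ▸ List.Nodup.concat hw hp.support_nodup
    have huniq := hT.existsUnique_path r w
    obtain ⟨c, _, hcu⟩ := huniq
    have e1 : p.concat h = c := hcu _ hp2
    have e2 : q = c := hcu _ hq'
    have : (p.concat h).length = q.length := by rw [e1, e2]
    rw [SimpleGraph.Walk.length_concat, hpl, hql, he] at this
    omega

lemma tree_parity (hT : T.IsTree) (r : V) {u w : V} (h : T.Adj u w) :
    ¬ (Even (T.dist r u) ↔ Even (T.dist r w)) := by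
  have hne := tree_dist_ne hT r h
  have h1 : T.dist r w ≤ T.dist r u + T.dist u w := hT.isConnected.dist_triangle
  have h2 : T.dist r u ≤ T.dist r w + T.dist w u := hT.isConnected.dist_triangle
  have huw : T.dist u w = 1 := SimpleGraph.dist_eq_one_iff_adj.2 h
  have hwu : T.dist w u = 1 := SimpleGraph.dist_eq_one_iff_adj.2 h.symm
  rw [huw] at h1; rw [hwu] at h2
  rcases Nat.lt_or_ge (T.dist r u) (T.dist r w) with hlt | hge
  · have : T.dist r w = T.dist r u + 1 := by omega
    rw [this, Nat.even_add_one]; tauto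
  · have : T.dist r u = T.dist r w + 1 := by omega
    rw [this, Nat.even_add_one]; tauto

noncomputable def tsign (T : SimpleGraph V) (r v : V) : ℝ :=
  if Even (T.dist r v) then 1 else -1

lemma tsign_sq (r v : V) : tsign T r v * tsign T r v = 1 := by
  unfold tsign; split <;> norm_num

lemma tsign_adj (hT : T.IsTree) (r : V) {u w : V} (h : T.Adj u w) :
    tsign T r u * tsign T r w = -1 := by
  have := tree_parity hT r h
  unfold tsign
  by_cases h1 : Even (T.dist r u) <;> by_cases h2 : Even (T.dist r w) <;>
    simp [h1, h2] at this ⊢ <;> tauto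

end TreeSign

section AddLeaf
variable {V : Type*} [DecidableEq V] {T : SimpleGraph V} {v₀ : V}

lemma addLeaf_adj (T : SimpleGraph V) (v₀ : V) (a b : Option V) :
    (addLeaf T v₀).Adj a b ↔
      (a = none ∧ b = some v₀) ∨ (a = some v₀ ∧ b = none) ∨
      (∃ u w, T.Adj u w ∧ a = some u ∧ b = some w) := by
  rw [addLeaf, SimpleGraph.fromEdgeSet_adj]
  constructor
  · rintro ⟨hmem, hne⟩
    rw [Set.mem_union] at hmem
    rcases hmem with hmem | hmem
    · rw [Set.mem_singleton_iff, Sym2.eq_iff] at hmem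
      tauto
    · rw [Set.mem_image] at hmem
      obtain ⟨e, he, heq⟩ := hmem
      induction e with
      | _ u w =>
        rw [Sym2.map_pair_eq, Sym2.eq_iff] at heq
        rw [SimpleGraph.mem_edgeSet] at he
        rcases heq with ⟨h1, h2⟩ | ⟨h1, h2⟩
        · exact Or.inr (Or.inr ⟨u, w, he, h1.symm, h2.symm⟩)
        · exact Or.inr (Or.inr ⟨w, u, he.symm, h2.symm, h1.symm⟩)
  · rintro (⟨ha, hb⟩ | ⟨ha, hb⟩ | ⟨u, w, hadj, ha, hb⟩) <;> subst ha <;> subst hb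
    · exact ⟨Set.mem_union_left _ rfl, by simp⟩
    · refine ⟨Set.mem_union_left _ ?_, by simp⟩
      rw [Set.mem_singleton_iff, Sym2.eq_iff]; tauto
    · refine ⟨Set.mem_union_right _ ⟨s(u, w), hadj, Sym2.map_pair_eq _ _ _⟩, by simp [hadj.ne]⟩

lemma addLeaf_adj_some (u w : V) :
    (addLeaf T v₀).Adj (some u) (some w) ↔ T.Adj u w := by
  rw [addLeaf_adj]
  constructor
  · rintro (⟨h, -⟩ | ⟨-, h⟩ | ⟨u', w', h, h1, h2⟩)
    · exact absurd h (by simp)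
    · exact absurd h (by simp)
    · obtain rfl : u = u' := Option.some_injective _ h1
      obtain rfl : w = w' := Option.some_injective _ h2
      exact h
  · exact fun h => Or.inr (Or.inr ⟨u, w, h, rfl, rfl⟩)

lemma addLeaf_nbr_some (u : V) :
    (addLeaf T v₀).neighborSet (some u) =
      (if u = v₀ then {(none : Option V)} else ∅) ∪ (some '' T.neighborSet u) := by
  ext b
  cases b with
  | none =>
    rw [SimpleGraph.mem_neighborSet, addLeaf_adj]
    by_cases hu : u = v₀ <;> simp [hu]
  | some w =>
    rw [SimpleGraph.mem_neighborSet, addLeaf_adj_some]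
    by_cases hu : u = v₀ <;> simp [hu, SimpleGraph.mem_neighborSet]

lemma gdeg_addLeaf_some [Fintype V] (u : V) :
    gdeg (addLeaf T v₀) (some u) = gdeg T u + (if u = v₀ then 1 else 0) := by
  rw [gdeg, addLeaf_nbr_some]
  have himg : (some '' T.neighborSet u).ncard = gdeg T u :=
    Set.ncard_image_of_injective _ (Option.some_injective V)
  by_cases hu : u = v₀
  · rw [if_pos hu, if_pos hu]
    rw [Set.ncard_union_eq ?disj (Set.toFinite _) (Set.toFinite _), himg,
      Set.ncard_singleton, add_comm]
    case disj =>
      rw [Set.disjoint_left]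
      rintro x hx ⟨y, -, hy⟩
      rw [Set.mem_singleton_iff] at hx
      subst hx
      exact Option.some_ne_none _ hy
  · rw [if_neg hu, if_neg hu, Set.empty_union, himg, add_zero]

lemma sless_addLeaf_some [Fintype V] (u w : V) :
    sless (addLeaf T v₀) (some u) (some w)
      = sless T u w + (if u = w ∧ u = v₀ then 1 else 0) := by
  simp only [sless, Matrix.of_apply]
  by_cases h : u = w
  · subst h
    rw [if_pos rfl, if_pos rfl, gdeg_addLeaf_some]
    have hna : ¬ (addLeaf T v₀).Adj (some u) (some u) := SimpleGraph.irrefl _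
    have hna' : ¬ T.Adj u u := T.irrefl
    rw [if_neg hna, if_neg hna']
    by_cases hu : u = v₀ <;> simp [hu]
  · have h' : ¬ (some u = some w) := fun hc => h (Option.some_injective _ hc)
    rw [if_neg h', if_neg h, if_neg (fun hc : u = w ∧ u = v₀ => h hc.1), add_zero]
    by_cases ha : T.Adj u w
    · rw [if_pos ((addLeaf_adj_some u w).2 ha), if_pos ha]
    · rw [if_neg (fun hc => ha ((addLeaf_adj_some u w).1 hc)), if_neg ha]

end AddLeaf

section Quad
variable {V : Type*} [Fintype V] [DecidableEq V] {G T : SimpleGraph V}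

lemma dot_mulVec_double (A : Matrix V V ℝ) (x : V → ℝ) :
    x ⬝ᵥ (A *ᵥ x) = ∑ u, ∑ v, A u v * x u * x v := by
  simp only [dotProduct, mulVec, Finset.mul_sum]
  refine Finset.sum_congr rfl fun u _ => Finset.sum_congr rfl fun v _ => by ring

lemma quad_abs_le (A : Matrix V V ℝ) (hA : ∀ u v, 0 ≤ A u v) (g : V → ℝ) :
    g ⬝ᵥ (A *ᵥ g) ≤ (fun v => |g v|) ⬝ᵥ (A *ᵥ fun v => |g v|) := by
  rw [dot_mulVec_double, dot_mulVec_double]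
  refine Finset.sum_le_sum fun u _ => Finset.sum_le_sum fun v _ => ?_
  have h1 : A u v * g u * g v ≤ A u v * |g u * g v| := by
    rw [mul_assoc]
    exact mul_le_mul_of_nonneg_left (le_abs_self _) (hA u v)
  calc A u v * g u * g v ≤ A u v * |g u * g v| := h1
    _ = A u v * |g u| * |g v| := by rw [abs_mul, mul_assoc]

lemma abs_dot_self (g : V → ℝ) :
    (fun v => |g v|) ⬝ᵥ (fun v => |g v|) = g ⬝ᵥ g := by
  simp only [dotProduct]
  exact Finset.sum_congr rfl fun v _ => abs_mul_abs_self _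

/-- Zero propagation along an edge for a nonnegative eigenvector of the signless Laplacian. -/
lemma sless_prop_zero (G : SimpleGraph V) (h : V → ℝ) (hnn : ∀ v, 0 ≤ h v) {lam : ℝ}
    (he : sless G *ᵥ h = lam • h) {u w : V} (hu : h u = 0) (hadj : G.Adj u w) : h w = 0 := by
  have h1 : (sless G *ᵥ h) u = lam * h u := by rw [he]; rfl
  have h2 : (sless G *ᵥ h) u = ∑ v, sless G u v * h v := rfl
  have h3 : ∑ v, sless G u v * h v = 0 := by rw [← h2, h1, hu, mul_zero]
  have h4 : ∀ v ∈ Finset.univ, sless G u v * h v = 0 :=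
    (Finset.sum_eq_zero_iff_of_nonneg fun v _ =>
      mul_nonneg (sless_nonneg G u v) (hnn v)).1 h3
  have h5 := h4 w (Finset.mem_univ w)
  have h6 : sless G u w = 1 := by
    simp only [sless, Matrix.of_apply, if_neg hadj.ne, if_pos hadj, zero_add]
  rw [h6, one_mul] at h5
  exact h5

lemma sless_prop_zero_walk (G : SimpleGraph V) (h : V → ℝ) (hnn : ∀ v, 0 ≤ h v) {lam : ℝ}
    (he : sless G *ᵥ h = lam • h) {a b : V} (p : G.Walk a b) (ha : h a = 0) : h b = 0 := by
  induction p with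
  | nil => exact ha
  | cons hadj p ih => exact ih (sless_prop_zero G h hnn he ha hadj)

end Quad

section QuadAdd
variable {V : Type*} [Fintype V] [DecidableEq V]

lemma optExt_dot_self (h : V → ℝ) :
    (fun a : Option V => a.elim 0 h) ⬝ᵥ (fun a : Option V => a.elim 0 h) = h ⬝ᵥ h := by
  simp only [dotProduct]
  rw [Fintype.sum_option]
  simp [Option.elim]

lemma quad_addLeaf (T : SimpleGraph V) (v₀ : V) (h : V → ℝ) :
    (fun a : Option V => a.elim 0 h) ⬝ᵥ (sless (addLeaf T v₀) *ᵥ fun a : Option V => a.elim 0 h)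
      = h ⬝ᵥ (sless T *ᵥ h) + (h v₀)^2 := by
  rw [dot_mulVec_double, dot_mulVec_double]
  rw [Fintype.sum_option]
  have hnone : ∑ b : Option V,
      sless (addLeaf T v₀) none b * (Option.elim none 0 h) * (Option.elim b 0 h) = 0 := by
    apply Finset.sum_eq_zero
    intro b _
    simp [Option.elim]
  rw [hnone, zero_add]
  have hrow : ∀ u : V, (∑ b : Option V,
      sless (addLeaf T v₀) (some u) b * (Option.elim (some u) 0 h) * (Option.elim b 0 h))
      = ∑ w : V, (sless T u w + (if u = w ∧ u = v₀ then 1 else 0)) * h u * h w := by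
    intro u
    rw [Fintype.sum_option]
    simp only [Option.elim]
    rw [mul_zero, zero_add]
    refine Finset.sum_congr rfl fun w _ => by rw [sless_addLeaf_some]
  rw [Finset.sum_congr rfl fun u _ => hrow u]
  have expand : ∀ u w : V, (sless T u w + (if u = w ∧ u = v₀ then 1 else 0)) * h u * h w
      = sless T u w * h u * h w + (if u = w ∧ u = v₀ then 1 else 0) * h u * h w :=
    fun u w => by ring
  simp only [expand, Finset.sum_add_distrib]
  congr 1
  have hterm : ∀ u w : V, (if u = w ∧ u = v₀ then (1:ℝ) else 0) * h u * h w
      = if u = v₀ then (if w = v₀ then h v₀ * h v₀ else 0) else 0 := by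
    intro u w
    by_cases h1 : u = v₀
    · by_cases h2 : w = v₀
      · rw [if_pos h1, if_pos h2, if_pos ⟨h1.trans h2.symm, h1⟩, one_mul, h1, h2]
      · rw [if_pos h1, if_neg h2, if_neg (fun hc => h2 (hc.1.symm.trans hc.2)),
          zero_mul, zero_mul]
    · rw [if_neg h1, if_neg (fun hc : u = w ∧ u = v₀ => h1 hc.2), zero_mul, zero_mul]
  simp only [hterm]
  simp [Finset.sum_ite_eq', sq]

end QuadAdd

section Spectral
variable {V : Type*} [Fintype V] [DecidableEq V] {M : Matrix V V ℝ}

lemma inner_eq_dot (x y : EuclideanSpace ℝ V) : inner (𝕜 := ℝ) x y = ⇑x ⬝ᵥ ⇑y := by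
  simp [PiLp.inner_apply, dotProduct, RCLike.inner_apply, mul_comm]

lemma dot_mulVec_symm (hM : M.IsHermitian) (u x : V → ℝ) :
    u ⬝ᵥ (M *ᵥ x) = (M *ᵥ u) ⬝ᵥ x := by
  rw [Matrix.dotProduct_mulVec, ← Matrix.mulVec_transpose]
  congr 1
  conv_rhs => rw [← hM.eq]
  simp [conjTranspose, Matrix.map]
  rfl

noncomputable def coeff (hM : M.IsHermitian) (x : EuclideanSpace ℝ V) (j : V) : ℝ :=
  hM.eigenvectorBasis.repr x j

lemma coeff_eq (hM : M.IsHermitian) (x : EuclideanSpace ℝ V) (j : V) :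
    coeff hM x j = ⇑(hM.eigenvectorBasis j) ⬝ᵥ ⇑x := by
  rw [coeff, hM.eigenvectorBasis.repr_apply_apply, inner_eq_dot]

lemma dot_self_eq (hM : M.IsHermitian) (x : EuclideanSpace ℝ V) :
    ⇑x ⬝ᵥ ⇑x = ∑ j, (coeff hM x j)^2 := by
  have h := inner_eq_dot x x
  rw [← hM.eigenvectorBasis.repr.inner_map_map x x, inner_eq_dot] at h
  rw [← h]
  simp [coeff, dotProduct, sq]

lemma coeff_mulVec (hM : M.IsHermitian) (x : EuclideanSpace ℝ V) (j : V) :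
    coeff hM (Matrix.toEuclideanLin M x) j = hM.eigenvalues j * coeff hM x j := by
  rw [coeff_eq, coeff_eq]
  have hcoe : ⇑(Matrix.toEuclideanLin M x) = M *ᵥ ⇑x := rfl
  rw [hcoe, dot_mulVec_symm hM, hM.mulVec_eigenvectorBasis, smul_dotProduct]
  rfl

lemma dot_mulVec_eq (hM : M.IsHermitian) (x : EuclideanSpace ℝ V) :
    ⇑x ⬝ᵥ (M *ᵥ ⇑x) = ∑ j, hM.eigenvalues j * (coeff hM x j)^2 := by
  have h : inner (𝕜 := ℝ) x (Matrix.toEuclideanLin M x) = ⇑x ⬝ᵥ (M *ᵥ ⇑x) := inner_eq_dot _ _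
  rw [← hM.eigenvectorBasis.repr.inner_map_map, inner_eq_dot] at h
  rw [← h]
  simp only [dotProduct]
  refine Finset.sum_congr rfl fun j _ => ?_
  have hc : hM.eigenvectorBasis.repr (Matrix.toEuclideanLin M x) j
      = hM.eigenvalues j * coeff hM x j := coeff_mulVec hM x j
  calc hM.eigenvectorBasis.repr x j * hM.eigenvectorBasis.repr (Matrix.toEuclideanLin M x) j
      = coeff hM x j * (hM.eigenvalues j * coeff hM x j) := by rw [← hc]; rfl
    _ = hM.eigenvalues j * (coeff hM x j)^2 := by ring

lemma eig_mem (hM : M.IsHermitian) (j : V) :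
    ∃ f : V → ℝ, f ≠ 0 ∧ M *ᵥ f = hM.eigenvalues j • f := by
  refine ⟨⇑(hM.eigenvectorBasis j), ?_, hM.mulVec_eigenvectorBasis j⟩
  intro h0
  have h1 : hM.eigenvectorBasis j = 0 := by
    apply (WithLp.equiv 2 (V → ℝ)).injective
    exact h0
  have := hM.eigenvectorBasis.orthonormal.1 j
  rw [h1] at this
  simp at this

lemma quad_le (hM : M.IsHermitian) {lam : ℝ} (hle : ∀ j, hM.eigenvalues j ≤ lam)
    (x : EuclideanSpace ℝ V) : ⇑x ⬝ᵥ (M *ᵥ ⇑x) ≤ lam * (⇑x ⬝ᵥ ⇑x) := by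
  rw [dot_mulVec_eq hM, dot_self_eq hM, Finset.mul_sum]
  exact Finset.sum_le_sum fun j _ => mul_le_mul_of_nonneg_right (hle j) (sq_nonneg _)

lemma eigvec_of_quad_eq (hM : M.IsHermitian) {lam : ℝ} (hle : ∀ j, hM.eigenvalues j ≤ lam)
    (x : EuclideanSpace ℝ V) (heq : ⇑x ⬝ᵥ (M *ᵥ ⇑x) = lam * (⇑x ⬝ᵥ ⇑x)) :
    M *ᵥ ⇑x = lam • ⇑x := by
  have hz : ∀ j ∈ Finset.univ, (lam - hM.eigenvalues j) * (coeff hM x j)^2 = 0 := by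
    apply (Finset.sum_eq_zero_iff_of_nonneg ?_).1
    · rw [dot_mulVec_eq hM, dot_self_eq hM, Finset.mul_sum] at heq
      have h := heq.symm
      rw [← sub_eq_zero, ← Finset.sum_sub_distrib] at h
      convert h using 2 with j
      ring
    · exact fun j _ => mul_nonneg (by linarith [hle j]) (sq_nonneg _)
  have hrepr : hM.eigenvectorBasis.repr (Matrix.toEuclideanLin M x)
      = hM.eigenvectorBasis.repr (lam • x) := by
    ext j
    have h1 : hM.eigenvectorBasis.repr (Matrix.toEuclideanLin M x) j
        = hM.eigenvalues j * coeff hM x j := coeff_mulVec hM x j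
    have h2 := hz j (Finset.mem_univ j)
    rcases mul_eq_zero.1 h2 with h | h
    · have he : hM.eigenvalues j = lam := by linarith
      rw [h1, he]
      simp [coeff]
    · have hc : coeff hM x j = 0 := sq_eq_zero_iff.1 h
      rw [h1, hc, mul_zero]
      have h3 : hM.eigenvectorBasis.repr (lam • x) j = lam * hM.eigenvectorBasis.repr x j := by
        rw [_root_.map_smul]; rfl
      rw [h3]
      simp [coeff] at hc
      rw [hc, mul_zero]
  have h4 := hM.eigenvectorBasis.repr.injective hrepr
  have hcoe : ⇑(Matrix.toEuclideanLin M x) = M *ᵥ ⇑x := rfl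
  rw [← hcoe, h4]
  rfl

lemma exists_eig_gt (hM : M.IsHermitian) {lam : ℝ} (x : EuclideanSpace ℝ V)
    (hgt : lam * (⇑x ⬝ᵥ ⇑x) < ⇑x ⬝ᵥ (M *ᵥ ⇑x)) : ∃ j, lam < hM.eigenvalues j := by
  by_contra hcon
  push_neg at hcon
  exact absurd (quad_le hM hcon x) (not_le.2 hgt)

end Spectral

/-- Adding a pendant vertex to a tree strictly increases the largest Laplacian
eigenvalue. -/
theorem stmt18 {V : Type*} [Fintype V] [DecidableEq V] (hcard : 2 ≤ Fintype.card V)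
    (T : SimpleGraph V) (hT : T.IsTree) (v₀ : V) (lam lam' : ℝ)
    (hlam : IsMaxEig T lam) (hlam' : IsMaxEig (addLeaf T v₀) lam') :
    lam < lam' := by
  classical
  obtain ⟨f, hf0, hfe⟩ := hlam.1
  have hub := hlam.2
  have hub' := hlam'.2
  -- the bipartite sign on T
  set σ : V → ℝ := tsign T v₀ with hσdef
  have hσ1 : ∀ v, σ v * σ v = 1 := fun v => tsign_sq v₀ v
  have hσ2 : ∀ u v, T.Adj u v → σ u * σ v = -1 := fun u v hadj => tsign_adj hT v₀ hadj
  have hQ := sless_herm T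
  -- all eigenvalues of the signless Laplacian are ≤ lam
  have hQub : ∀ j, hQ.eigenvalues j ≤ lam := by
    intro j
    obtain ⟨y, hy0, hye⟩ := eig_mem hQ j
    exact hub ⟨fun v => σ v * y v, sgnmul_ne_zero σ hσ1 hy0,
      mulVec_sign σ hσ1 (lap_eq_conj σ hσ1 hσ2) hye⟩
  -- transfer the eigenvector of lap to sless
  set g : V → ℝ := fun v => σ v * f v with hgdef
  have hg : sless T *ᵥ g = lam • g :=
    mulVec_sign σ hσ1 (sless_eq_conj σ hσ1 hσ2) hfe
  set h : V → ℝ := fun v => |g v| with hhdef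
  have hnn : ∀ v, 0 ≤ h v := fun v => abs_nonneg _
  have hgq : g ⬝ᵥ (sless T *ᵥ g) = lam * (g ⬝ᵥ g) := by
    rw [hg, dotProduct_smul, smul_eq_mul]
  have hge : lam * (h ⬝ᵥ h) ≤ h ⬝ᵥ (sless T *ᵥ h) := by
    have h1 := quad_abs_le (sless T) (sless_nonneg T) g
    rw [hgq] at h1
    have h2 : h ⬝ᵥ h = g ⬝ᵥ g := abs_dot_self g
    rw [h2]
    exact h1
  set x : EuclideanSpace ℝ V := (WithLp.equiv 2 (V → ℝ)).symm h with hxdef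
  have hx : ⇑x = h := rfl
  have hle : h ⬝ᵥ (sless T *ᵥ h) ≤ lam * (h ⬝ᵥ h) := by
    have := quad_le hQ hQub x
    rw [hx] at this
    exact this
  have heq : h ⬝ᵥ (sless T *ᵥ h) = lam * (h ⬝ᵥ h) := le_antisymm hle hge
  have heig : sless T *ᵥ h = lam • h := by
    have := eigvec_of_quad_eq hQ hQub x (by rw [hx]; exact heq)
    rw [hx] at this
    exact this
  -- h is nonzero at v₀
  have hv0 : h v₀ ≠ 0 := by
    intro hz
    apply hf0
    funext v
    have hw : T.Walk v₀ v := (hT.isConnected.preconnected v₀ v).some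
    have hv : h v = 0 := sless_prop_zero_walk T h hnn heig hw hz
    have hgv : g v = 0 := abs_eq_zero.1 hv
    have : σ v * f v = 0 := hgv
    have h1 := hσ1 v
    by_cases hzz : σ v = 0
    · rw [hzz, mul_zero] at h1; norm_num at h1
    · exact (mul_eq_zero.1 this).resolve_left hzz
  have hv0pos : 0 < (h v₀)^2 := pow_pos (lt_of_le_of_ne (hnn v₀) (Ne.symm hv0)) 2
  -- the sign on the extended tree
  set σ' : Option V → ℝ := fun a => a.elim (-(σ v₀)) σ with hσ'def
  have hσ'1 : ∀ a, σ' a * σ' a = 1 := by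
    intro a
    cases a with
    | none => simp only [hσ'def, Option.elim]; rw [neg_mul_neg]; exact hσ1 v₀
    | some v => exact hσ1 v
  have hσ'2 : ∀ a b, (addLeaf T v₀).Adj a b → σ' a * σ' b = -1 := by
    intro a b hadj
    rw [addLeaf_adj] at hadj
    rcases hadj with ⟨ha, hb⟩ | ⟨ha, hb⟩ | ⟨u, w, hadj, ha, hb⟩ <;> subst ha <;> subst hb
    · show -(σ v₀) * σ v₀ = -1
      rw [neg_mul, hσ1 v₀]
    · show σ v₀ * -(σ v₀) = -1
      rw [mul_neg, hσ1 v₀]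
    · exact hσ2 u w hadj
  have hQ' := sless_herm (addLeaf T v₀)
  -- the extended vector has large Rayleigh quotient
  set h' : Option V → ℝ := fun a => a.elim 0 h with hh'def
  set x' : EuclideanSpace ℝ (Option V) := (WithLp.equiv 2 (Option V → ℝ)).symm h' with hx'def
  have hx' : ⇑x' = h' := rfl
  have hgt : lam * (h' ⬝ᵥ h') < h' ⬝ᵥ (sless (addLeaf T v₀) *ᵥ h') := by
    rw [quad_addLeaf T v₀ h, optExt_dot_self h, heq]
    linarith
  obtain ⟨j, hj⟩ := exists_eig_gt hQ' x' (by rw [hx']; exact hgt)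
  obtain ⟨y', hy0', hye'⟩ := eig_mem hQ' j
  have hfin : hQ'.eigenvalues j ≤ lam' :=
    hub' ⟨fun a => σ' a * y' a, sgnmul_ne_zero σ' hσ'1 hy0',
      mulVec_sign σ' hσ'1 (lap_eq_conj σ' hσ'1 hσ'2) hye'⟩
  linarith
end
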